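/- arXiv:1807.09874 — 4 statements merged into one kernel-verified Lean document; each statement's English description precedes it below -/
import Mathlib

section
/- Let v ≥ 0 be measurable on Ω and suppose there exists C ≥ 0 such that ∫_Ω v f dx ≤ C·max(∫_Ω ω f dx, ‖f‖_{L^p(Ω)}) for every nonnegative f ∈ L^p ∩ L^1_ω(Ω) with bounded support. Then v ∈ X_ω^q(Ω) and ‖v‖_{X_ω^q} ≤ C. -/
open MeasureTheory

/-- The inf-convolution norm of the sum space `X_ω^q = L^q + L^∞_{1/ω}`. -/
noncomputable def XNorm {α : Type*} [MeasurableSpace α] (μ : Measure α)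
    (q : ℝ) (ω : α → ℝ) (v : α → ℝ) : ENNReal :=
  sInf {c : ENNReal | ∃ w z : α → ℝ, v = w + z ∧
    c = eLpNorm (fun x => w x / ω x) ⊤ μ + eLpNorm z (ENNReal.ofReal q) μ}

/-- Membership in the sum space `X_ω^q = L^q + L^∞_{1/ω}`. -/
def MemX {α : Type*} [MeasurableSpace α] (μ : Measure α)
    (q : ℝ) (ω : α → ℝ) (v : α → ℝ) : Prop :=
  ∃ w z : α → ℝ, v = w + z ∧ MemLp (fun x => w x / ω x) ⊤ μ ∧
    MemLp z (ENNReal.ofReal q) μ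

/-- Membership in the intersection space `L^p ∩ L^1_ω`. -/
def MemInter {α : Type*} [MeasurableSpace α] (μ : Measure α)
    (p : ℝ) (ω : α → ℝ) (g : α → ℝ) : Prop :=
  MemLp g (ENNReal.ofReal p) μ ∧ Integrable (fun x => ω x * g x) μ

namespace Stmt6Aux

open Filter Set

/-- The abstract real-variable "balance" lemma. -/
lemma balance (p q C : ℝ) (hp : 1 < p) (hq : 1 < q) (hC : 0 ≤ C)
    (hpq : 1 / p + 1 / q = 1)
    (B I : ℝ → ℝ) (hBc : Continuous B) (hIc : Continuous I)
    (hB0 : ∀ a, 0 ≤ B a)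
    (hMI : ∀ a, 0 ≤ a → B a + a * I a ≤ C * max (I a) (B a ^ (1/p))) :
    ∃ a, a ∈ Set.Icc 0 C ∧ B a ≤ (C - a) ^ q := by
  have hp0 : 0 < p := lt_trans one_pos hp
  have hq0 : 0 < q := lt_trans one_pos hq
  have hip : 0 < 1/p := by positivity
  have hBpc : Continuous fun a => B a ^ (1/p) := by
    rw [continuous_iff_continuousAt]
    intro a
    exact (Real.continuousAt_rpow_const (B a) (1/p) (Or.inr hip.le)).comp hBc.continuousAt
  set S : Set ℝ := {a : ℝ | 0 ≤ a ∧ I a ≤ B a ^ (1/p)} with hS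
  have claim1 : ∀ a, C < a → a ∈ S := by
    intro a ha
    by_contra hs
    have ha0 : 0 ≤ a := le_trans hC ha.le
    have hlt : B a ^ (1/p) < I a := by
      simp only [hS, Set.mem_setOf_eq, not_and, not_le] at hs
      exact hs ha0
    have hmax : max (I a) (B a ^ (1/p)) = I a := max_eq_left hlt.le
    have h1 := hMI a ha0
    rw [hmax] at h1
    have hIpos : 0 < I a := lt_of_le_of_lt (Real.rpow_nonneg (hB0 a) _) hlt
    nlinarith [hB0 a]
  have hSne : S.Nonempty := ⟨C + 1, claim1 _ (by linarith)⟩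
  have hbdd : BddBelow S := ⟨0, fun b hb => hb.1⟩
  set a0 : ℝ := sInf S with ha0def
  have ha00 : 0 ≤ a0 := le_csInf hSne fun b hb => hb.1
  have ha0C : a0 ≤ C := by
    refine le_of_forall_pos_le_add fun ε hε => ?_
    exact csInf_le hbdd (claim1 (C + ε) (by linarith))
  have claim2 : I a0 ≤ B a0 ^ (1/p) := by
    by_contra hcon
    push_neg at hcon
    have hev : ∀ᶠ b in nhds a0, B b ^ (1/p) < I b := by
      have := (hBpc.sub hIc).continuousAt (x := a0)
      have h2 : ∀ᶠ b in nhds a0, B b ^ (1/p) - I b < 0 :=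
        this.eventually_lt_const (by show B a0 ^ (1/p) - I a0 < 0; linarith)
      exact h2.mono fun b hb => by linarith
    rcases Metric.eventually_nhds_iff.1 hev with ⟨δ, hδ, hball⟩
    obtain ⟨s, hsS, hslt⟩ : ∃ s ∈ S, s < a0 + δ :=
      exists_lt_of_csInf_lt hSne (by linarith)
    have hs0 : a0 ≤ s := csInf_le hbdd hsS
    have : B s ^ (1/p) < I s := hball (by rw [Real.dist_eq, abs_sub_lt_iff]; constructor <;> linarith)
    exact absurd hsS.2 (not_le.2 this)
  have key : B a0 + a0 * (B a0 ^ (1/p)) ≤ C * (B a0 ^ (1/p)) := by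
    have h1 := hMI a0 ha00
    rw [max_eq_right claim2] at h1
    rcases eq_or_lt_of_le ha00 with h0 | h0
    · rw [← h0] at h1 ⊢; simpa using h1
    · have claim3 : B a0 ^ (1/p) ≤ I a0 := by
        by_contra hcon
        push_neg at hcon
        have hev : ∀ᶠ b in nhds a0, I b < B b ^ (1/p) := by
          have := (hIc.sub hBpc).continuousAt (x := a0)
          have h2 : ∀ᶠ b in nhds a0, I b - B b ^ (1/p) < 0 :=
            this.eventually_lt_const (by show I a0 - B a0 ^ (1/p) < 0; linarith)
          exact h2.mono fun b hb => by linarith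
        rcases Metric.eventually_nhds_iff.1 hev with ⟨δ, hδ, hball⟩
        set b := max (a0 - δ/2) 0 with hbdef
        have hb0 : 0 ≤ b := le_max_right _ _
        have hblt : b < a0 := max_lt (by linarith) h0
        have hbd : dist b a0 < δ := by
          rw [Real.dist_eq, abs_sub_lt_iff]
          constructor
          · linarith
          · have : a0 - δ/2 ≤ b := le_max_left _ _
            linarith
        have hbS : b ∈ S := ⟨hb0, (hball hbd).le⟩
        exact absurd (csInf_le hbdd hbS) (not_le.2 hblt)
      have : I a0 = B a0 ^ (1/p) := le_antisymm claim2 claim3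
      rw [this] at h1; exact h1
  refine ⟨a0, ⟨ha00, ha0C⟩, ?_⟩
  rcases eq_or_lt_of_le (hB0 a0) with hB | hB
  · rw [← hB]; exact Real.rpow_nonneg (by linarith) _
  · have hXpos : 0 < B a0 ^ (1/p) := Real.rpow_pos_of_pos hB _
    have hsum : 1/q + 1/p = 1 := by linarith
    have hsplit : B a0 = B a0 ^ (1/q) * B a0 ^ (1/p) := by
      rw [← Real.rpow_add hB, hsum, Real.rpow_one]
    have h2 : B a0 ^ (1/q) * (B a0 ^ (1/p)) ≤ (C - a0) * (B a0 ^ (1/p)) := by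
      nlinarith [key, hsplit]
    have h3 : B a0 ^ (1/q) ≤ C - a0 := le_of_mul_le_mul_right h2 hXpos
    have h4 : (B a0 ^ (1/q)) ^ q ≤ (C - a0) ^ q :=
      Real.rpow_le_rpow (Real.rpow_nonneg (hB0 _) _) h3 hq0.le
    rwa [← Real.rpow_mul (hB0 a0), one_div_mul_cancel (ne_of_gt hq0), Real.rpow_one] at h4

variable {h : ℕ}

/-- The truncated positive part `(v - a·ω)₊`. -/
def Zf (v ω : (Fin h → ℝ) → ℝ) (a : ℝ) (x : Fin h → ℝ) : ℝ := max (v x - a * ω x) 0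

/-- The exhausting sequence of sets. -/
def Aset (v ω : (Fin h → ℝ) → ℝ) (n : ℕ) : Set (Fin h → ℝ) :=
  {x | v x ≤ n} ∩ {x | ω x ≤ n} ∩ Metric.closedBall 0 n

section Basic

variable {v ω : (Fin h → ℝ) → ℝ}

lemma Zf_nonneg (a : ℝ) (x : Fin h → ℝ) : 0 ≤ Zf v ω a x := le_max_right _ _

lemma Zf_meas (hv : Measurable v) (hω : Measurable ω) (a : ℝ) :
    Measurable (Zf v ω a) :=
  (hv.sub (measurable_const.mul hω)).max measurable_const

lemma Zf_le_v (hv : ∀ x, 0 ≤ v x) (hω : ∀ x, 1 ≤ ω x) {a : ℝ} (ha : 0 ≤ a)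
    (x : Fin h → ℝ) : Zf v ω a x ≤ v x := by
  have h1 := hω x
  have := hv x
  have : 0 ≤ a * ω x := by nlinarith
  exact max_le (by linarith) (hv x)

lemma Zf_le_abs (hv : ∀ x, 0 ≤ v x) (hω : ∀ x, 1 ≤ ω x) (a : ℝ)
    (x : Fin h → ℝ) : Zf v ω a x ≤ v x + |a| * ω x := by
  have h1 := hω x
  have h2 := hv x
  have h3 : -a ≤ |a| := neg_le_abs a
  have h4 : 0 ≤ |a| := abs_nonneg a
  refine max_le ?_ (by nlinarith)
  nlinarith

lemma Zf_cont (x : Fin h → ℝ) : Continuous fun a : ℝ => Zf v ω a x :=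
  (continuous_const.sub (continuous_id.mul continuous_const)).max continuous_const

lemma Aset_meas (hv : Measurable v) (hω : Measurable ω) (n : ℕ) :
    MeasurableSet (Aset v ω n) :=
  ((measurableSet_le hv measurable_const).inter
    (measurableSet_le hω measurable_const)).inter Metric.isClosed_closedBall.measurableSet

lemma Aset_mono : Monotone (Aset v ω) := by
  intro i j hij x hx
  obtain ⟨⟨h1, h2⟩, h3⟩ := hx
  have hij' : (i : ℝ) ≤ j := Nat.cast_le.2 hij
  exact ⟨⟨le_trans h1 hij', le_trans h2 hij'⟩,
    Metric.closedBall_subset_closedBall hij' h3⟩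

lemma Aset_cover (x : Fin h → ℝ) : ∃ n : ℕ, x ∈ Aset v ω n := by
  obtain ⟨n, hn⟩ := exists_nat_ge (max (max (v x) (ω x)) ‖x‖)
  refine ⟨n, ⟨⟨?_, ?_⟩, ?_⟩⟩
  · exact le_trans (le_trans (le_max_left _ _) (le_max_left _ _)) hn
  · exact le_trans (le_trans (le_max_right _ _) (le_max_left _ _)) hn
  · rw [mem_closedBall_zero_iff]
    exact le_trans (le_max_right _ _) hn

lemma Aset_fin (Ω : Set (Fin h → ℝ)) (n : ℕ) :
    volume.restrict Ω (Aset v ω n) ≠ ⊤ := by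
  have h1 : volume.restrict Ω (Aset v ω n) ≤ volume (Metric.closedBall (0 : Fin h → ℝ) n) := by
    refine le_trans (measure_mono ?_) (Measure.restrict_le_self _)
    exact Set.inter_subset_right
  exact ne_top_of_le_ne_top ((isCompact_closedBall _ _).measure_lt_top).ne h1

end Basic

lemma integrableOn_of_bdd {μ : Measure (Fin h → ℝ)} {D : Set (Fin h → ℝ)}
    (hD : MeasurableSet D) (hμD : μ D ≠ ⊤) {w : (Fin h → ℝ) → ℝ} (hw : Measurable w)
    {K : ℝ} (hb : ∀ x ∈ D, |w x| ≤ K) : IntegrableOn w D μ := by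
  haveI : IsFiniteMeasure (μ.restrict D) :=
    ⟨by rw [Measure.restrict_apply_univ]; exact hμD.lt_top⟩
  exact Integrable.mono' (integrable_const K) hw.aestronglyMeasurable
    ((ae_restrict_iff' hD).2 (ae_of_all _ fun x hx => by
      rw [Real.norm_eq_abs]; exact hb x hx))

/-- Continuity in the parameter `a` of truncated integrals. -/
lemma contInt {μ : Measure (Fin h → ℝ)} {v ω : (Fin h → ℝ) → ℝ}
    (hv_meas : Measurable v) (hω_meas : Measurable ω)
    (hv : ∀ x, 0 ≤ v x) (hω : ∀ x, 1 ≤ ω x)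
    {w : (Fin h → ℝ) → ℝ} (hw : Measurable w) (hw0 : ∀ x, 0 ≤ w x)
    {D : Set (Fin h → ℝ)} (hD : MeasurableSet D) (hμD : μ D ≠ ⊤)
    {K : ℝ} (hbw : ∀ x ∈ D, w x ≤ K) (hbv : ∀ x ∈ D, v x ≤ K) (hbω : ∀ x ∈ D, ω x ≤ K)
    {r : ℝ} (hr : 0 < r) :
    Continuous fun a : ℝ => ∫ x in D, w x * Zf v ω a x ^ r ∂μ := by
  haveI : IsFiniteMeasure (μ.restrict D) :=
    ⟨by rw [Measure.restrict_apply_univ]; exact hμD.lt_top⟩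
  rw [continuous_iff_continuousAt]
  intro a
  unfold ContinuousAt
  rw [Filter.tendsto_iff_seq_tendsto]
  intro u hu
  obtain ⟨M, hM⟩ := (hu.abs).bddAbove_range
  have hMb : ∀ k, |u k| ≤ M := fun k => hM ⟨k, rfl⟩
  have hM0 : 0 ≤ M := le_trans (abs_nonneg _) (hMb 0)
  set K0 : ℝ := max K 1 with hK0def
  have hK01 : 1 ≤ K0 := le_max_right _ _
  have hK00 : 0 ≤ K0 := by linarith
  set Kb : ℝ := K0 * (K0 + M * K0) ^ r with hKbdef
  have hZm : ∀ b : ℝ, Measurable (Zf v ω b) := Zf_meas hv_meas hω_meas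
  have hZrm : ∀ b : ℝ, Measurable fun x => Zf v ω b x ^ r := by
    intro b; have := hZm b; fun_prop
  have hmeas : ∀ k : ℕ, AEStronglyMeasurable (fun x => w x * Zf v ω (u k) x ^ r)
      (μ.restrict D) := fun k => (hw.mul (hZrm (u k))).aestronglyMeasurable
  have hbd : ∀ k : ℕ, ∀ᵐ x ∂μ.restrict D, ‖w x * Zf v ω (u k) x ^ r‖ ≤ Kb := by
    intro k
    refine (ae_restrict_iff' hD).2 (ae_of_all _ fun x hx => ?_)
    have hZ0 := Zf_nonneg (v := v) (ω := ω) (u k) x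
    have hZb : Zf v ω (u k) x ≤ K0 + M * K0 := by
      have h1 := Zf_le_abs hv hω (u k) x
      have h2 := hbv x hx
      have h3 := hbω x hx
      have h4 := hMb k
      have h5 : K ≤ K0 := le_max_left _ _
      have h6 := abs_nonneg (u k)
      have h7 : 1 ≤ ω x := hω x
      nlinarith
    have hwx : 0 ≤ w x := hw0 x
    have hwb : w x ≤ K0 := le_trans (hbw x hx) (le_max_left _ _)
    rw [Real.norm_eq_abs, abs_of_nonneg (mul_nonneg hwx (Real.rpow_nonneg hZ0 r))]
    have hZr : Zf v ω (u k) x ^ r ≤ (K0 + M * K0) ^ r :=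
      Real.rpow_le_rpow hZ0 hZb hr.le
    have h8 : (0:ℝ) ≤ (K0 + M * K0) ^ r := Real.rpow_nonneg (by nlinarith) r
    nlinarith
  have hlim : ∀ᵐ x ∂μ.restrict D,
      Filter.Tendsto (fun k => w x * Zf v ω (u k) x ^ r) atTop
        (nhds (w x * Zf v ω a x ^ r)) := by
    refine ae_of_all _ fun x => ?_
    have hZt : Filter.Tendsto (fun k => Zf v ω (u k) x) atTop (nhds (Zf v ω a x)) :=
      ((Zf_cont (v:=v) (ω:=ω) x).continuousAt).tendsto.comp hu
    have hrt : Filter.Tendsto (fun k => Zf v ω (u k) x ^ r) atTop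
        (nhds (Zf v ω a x ^ r)) :=
      ((Real.continuousAt_rpow_const _ r (Or.inr hr.le)).tendsto.comp hZt)
    exact hrt.const_mul (w x)
  have := MeasureTheory.tendsto_integral_of_dominated_convergence (fun _ => Kb)
    hmeas (integrable_const Kb) hbd hlim
  exact this


/-- The master inequality obtained from testing against truncated powers of `(v-aω)₊`. -/
lemma MI (Ω : Set (Fin h → ℝ)) (hΩ : MeasurableSet Ω)
    (ω : (Fin h → ℝ) → ℝ) (hω_meas : Measurable ω) (hω : ∀ x, 1 ≤ ω x)
    (p q : ℝ) (hp : 1 < p) (hq : 1 < q) (hpq : 1 / p + 1 / q = 1)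
    (v : (Fin h → ℝ) → ℝ) (hv_meas : Measurable v) (hv : ∀ x, 0 ≤ v x)
    (C : ℝ)
    (hbound : ∀ f : (Fin h → ℝ) → ℝ, (∀ x, 0 ≤ f x) →
      MemInter (volume.restrict Ω) p ω f →
      Bornology.IsBounded (Function.support f) →
      (∫ x, v x * f x ∂(volume.restrict Ω)) ≤
        C * max (∫ x, ω x * f x ∂(volume.restrict Ω))
          ((eLpNorm f (ENNReal.ofReal p) (volume.restrict Ω)).toReal))
    (n : ℕ) (a : ℝ) (ha : 0 ≤ a) :
    (∫ x in Aset v ω n, Zf v ω a x ^ q ∂(volume.restrict Ω))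
      + a * (∫ x in Aset v ω n, ω x * Zf v ω a x ^ (q-1) ∂(volume.restrict Ω)) ≤
    C * max (∫ x in Aset v ω n, ω x * Zf v ω a x ^ (q-1) ∂(volume.restrict Ω))
      ((∫ x in Aset v ω n, Zf v ω a x ^ q ∂(volume.restrict Ω)) ^ (1/p)) := by
  have hp0 : 0 < p := lt_trans one_pos hp
  have hq0 : 0 < q := lt_trans one_pos hq
  have hq1 : 0 < q - 1 := by linarith
  have hqp : (q - 1) * p = q := by
    have hp' : p ≠ 0 := ne_of_gt hp0
    have hq' : q ≠ 0 := ne_of_gt hq0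
    field_simp at hpq
    ring_nf at hpq ⊢
    nlinarith [hpq]
  set μ := volume.restrict Ω with hμdef
  set D := Aset v ω n with hDdef
  have hD : MeasurableSet D := Aset_meas hv_meas hω_meas n
  have hμD : μ D ≠ ⊤ := Aset_fin Ω n
  set Z := Zf v ω a with hZdef
  set g : (Fin h → ℝ) → ℝ := fun x => Z x ^ (q-1) with hgdef
  set f : (Fin h → ℝ) → ℝ := D.indicator g with hfdef
  have hZm : Measurable Z := Zf_meas hv_meas hω_meas a
  have hgm : Measurable g := by fun_prop
  have hZ0 : ∀ x, 0 ≤ Z x := Zf_nonneg a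
  have hg0 : ∀ x, 0 ≤ g x := fun x => Real.rpow_nonneg (hZ0 x) _
  have hZle : ∀ x ∈ D, Z x ≤ (n : ℝ) := fun x hx =>
    le_trans (Zf_le_v hv hω ha x) hx.1.1
  have hgle : ∀ x ∈ D, g x ≤ (n : ℝ) ^ (q - 1) := fun x hx =>
    Real.rpow_le_rpow (hZ0 x) (hZle x hx) hq1.le
  have hn0 : (0:ℝ) ≤ n := Nat.cast_nonneg n
  -- integrabilities
  have iZq : IntegrableOn (fun x => Z x ^ q) D μ := by
    refine integrableOn_of_bdd hD hμD (by fun_prop) (K := (n:ℝ) ^ q) fun x hx => ?_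
    rw [abs_of_nonneg (Real.rpow_nonneg (hZ0 x) q)]
    exact Real.rpow_le_rpow (hZ0 x) (hZle x hx) hq0.le
  have iωg : IntegrableOn (fun x => ω x * g x) D μ := by
    refine integrableOn_of_bdd hD hμD (hω_meas.mul hgm)
      (K := (n:ℝ) * (n:ℝ) ^ (q-1)) fun x hx => ?_
    rw [abs_of_nonneg (mul_nonneg (le_trans zero_le_one (hω x)) (hg0 x))]
    exact mul_le_mul hx.1.2 (hgle x hx) (hg0 x) hn0
  have ivg : IntegrableOn (fun x => v x * g x) D μ := by
    refine integrableOn_of_bdd hD hμD (hv_meas.mul hgm)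
      (K := (n:ℝ) * (n:ℝ) ^ (q-1)) fun x hx => ?_
    rw [abs_of_nonneg (mul_nonneg (hv x) (hg0 x))]
    exact mul_le_mul hx.1.1 (hgle x hx) (hg0 x) hn0
  have hB0 : 0 ≤ ∫ x in D, Z x ^ q ∂μ :=
    integral_nonneg fun x => Real.rpow_nonneg (hZ0 x) q
  -- eLpNorm computation
  have hlp : eLpNorm f (ENNReal.ofReal p) μ
      = ENNReal.ofReal ((∫ x in D, Z x ^ q ∂μ) ^ (1/p)) := by
    rw [eLpNorm_eq_lintegral_rpow_enorm_toReal
      (by simp [ENNReal.ofReal_eq_zero]; linarith) ENNReal.ofReal_ne_top]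
    rw [ENNReal.toReal_ofReal hp0.le]
    have hpt : ∀ x, ‖f x‖ₑ ^ p
        = D.indicator (fun x => ENNReal.ofReal (Z x ^ q)) x := by
      intro x
      by_cases hx : x ∈ D
      · rw [Set.indicator_of_mem hx, hfdef, Set.indicator_of_mem hx,
          Real.enorm_eq_ofReal (hg0 x), ENNReal.ofReal_rpow_of_nonneg (hg0 x) hp0.le]
        congr 1
        show (Z x ^ (q-1)) ^ p = Z x ^ q
        rw [← Real.rpow_mul (hZ0 x), hqp]
      · rw [Set.indicator_of_notMem hx, hfdef, Set.indicator_of_notMem hx]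
        simp [ENNReal.zero_rpow_of_pos hp0]
    calc (∫⁻ x, ‖f x‖ₑ ^ p ∂μ) ^ (1/p)
        = (∫⁻ x, D.indicator (fun x => ENNReal.ofReal (Z x ^ q)) x ∂μ) ^ (1/p) := by
          rw [lintegral_congr hpt]
      _ = (∫⁻ x in D, ENNReal.ofReal (Z x ^ q) ∂μ) ^ (1/p) := by
          rw [lintegral_indicator hD]
      _ = (ENNReal.ofReal (∫ x in D, Z x ^ q ∂μ)) ^ (1/p) := by
          rw [ofReal_integral_eq_lintegral_ofReal iZq
            (ae_of_all _ fun x => Real.rpow_nonneg (hZ0 x) q)]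
      _ = ENNReal.ofReal ((∫ x in D, Z x ^ q ∂μ) ^ (1/p)) :=
          ENNReal.ofReal_rpow_of_nonneg hB0 (by positivity)
  -- admissibility of f
  have hf0 : ∀ x, 0 ≤ f x := Set.indicator_nonneg (fun x _ => hg0 x)
  have hsupp : Bornology.IsBounded (Function.support f) :=
    Metric.isBounded_closedBall.subset
      ((Set.support_indicator_subset).trans Set.inter_subset_right)
  have hωf_eq : (fun x => ω x * f x) = D.indicator (fun x => ω x * g x) := by
    funext x
    by_cases hx : x ∈ D <;>
      simp [hfdef, Set.indicator_of_mem, Set.indicator_of_notMem, hx]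
  have hvf_eq : (fun x => v x * f x) = D.indicator (fun x => v x * g x) := by
    funext x
    by_cases hx : x ∈ D <;>
      simp [hfdef, Set.indicator_of_mem, Set.indicator_of_notMem, hx]
  have hmem : MemInter μ p ω f := by
    constructor
    · exact ⟨(hgm.indicator hD).aestronglyMeasurable,
        by rw [hlp]; exact ENNReal.ofReal_lt_top⟩
    · rw [hωf_eq]
      exact (integrable_indicator_iff hD).2 iωg
  have hkey := hbound f hf0 hmem hsupp
  -- rewrite the three integrals
  have e1 : ∫ x, v x * f x ∂μ = ∫ x in D, v x * g x ∂μ := by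
    rw [hvf_eq, integral_indicator hD]
  have e2 : ∫ x, ω x * f x ∂μ = ∫ x in D, ω x * g x ∂μ := by
    rw [hωf_eq, integral_indicator hD]
  have e3 : (eLpNorm f (ENNReal.ofReal p) μ).toReal
      = (∫ x in D, Z x ^ q ∂μ) ^ (1/p) := by
    rw [hlp, ENNReal.toReal_ofReal (by positivity)]
  -- pointwise identity
  have hv_eq : ∀ x, v x * g x = Z x ^ q + a * (ω x * g x) := by
    intro x
    by_cases hgx : g x = 0
    · have hZx : Z x = 0 := by
        by_contra hZx
        have hZp : 0 < Z x := lt_of_le_of_ne (hZ0 x) (Ne.symm hZx)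
        exact absurd hgx (ne_of_gt (Real.rpow_pos_of_pos hZp (q-1)))
      rw [hgx, hZx, Real.zero_rpow (ne_of_gt hq0)]
      ring
    · have hZx : 0 < Z x := by
        rcases eq_or_lt_of_le (hZ0 x) with h0 | h0
        · refine absurd ?_ hgx
          show Z x ^ (q-1) = 0
          rw [← h0]
          exact Real.zero_rpow (ne_of_gt hq1)
        · exact h0
      have hsub : 0 < v x - a * ω x := by
        by_contra hc
        push_neg at hc
        have : Z x = 0 := max_eq_right hc
        exact absurd this (ne_of_gt hZx)
      have hZeq : Z x = v x - a * ω x := max_eq_left hsub.le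
      have hZq : Z x ^ q = Z x * g x := by
        rw [hgdef]
        have : Z x * Z x ^ (q - 1) = Z x ^ (1:ℝ) * Z x ^ (q-1) := by
          rw [Real.rpow_one]
        rw [this, ← Real.rpow_add hZx]
        norm_num
      rw [hZq, hZeq]
      ring
  have e4 : ∫ x in D, v x * g x ∂μ
      = (∫ x in D, Z x ^ q ∂μ) + a * ∫ x in D, ω x * g x ∂μ := by
    rw [integral_congr_ae (ae_of_all _ hv_eq)]
    rw [integral_add iZq ((iωg.const_mul a))]
    congr 1
    exact integral_const_mul a _
  rw [e1, e2, e3, e4] at hkey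
  exact hkey


lemma iZq_gen {v ω : (Fin h → ℝ) → ℝ} (hv_meas : Measurable v) (hω_meas : Measurable ω)
    (hv : ∀ x, 0 ≤ v x) (hω : ∀ x, 1 ≤ ω x) (Ω : Set (Fin h → ℝ)) (n : ℕ)
    {b r : ℝ} (hb : 0 ≤ b) (hr : 0 ≤ r) :
    IntegrableOn (fun x => Zf v ω b x ^ r) (Aset v ω n) (volume.restrict Ω) := by
  have hZm : Measurable (Zf v ω b) := Zf_meas hv_meas hω_meas b
  refine integrableOn_of_bdd (Aset_meas hv_meas hω_meas n) (Aset_fin Ω n)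
    (by fun_prop) (K := (n:ℝ) ^ r) fun x hx => ?_
  rw [abs_of_nonneg (Real.rpow_nonneg (Zf_nonneg b x) r)]
  exact Real.rpow_le_rpow (Zf_nonneg b x)
    (le_trans (Zf_le_v hv hω hb x) hx.1.1) hr

end Stmt6Aux

/-- a nonnegative `v` whose pairing with every nonnegative
boundedly supported `f ∈ L^p ∩ L^1_ω` is controlled by
`C · max(∫ ω f, ‖f‖_{L^p})` belongs to `X_ω^q(Ω)` with norm at most `C`. -/
theorem stmt6 (h : ℕ) (Ω : Set (Fin h → ℝ)) (hΩ : IsOpen Ω)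
    (ω : (Fin h → ℝ) → ℝ) (hω_meas : Measurable ω) (hω : ∀ x, 1 ≤ ω x)
    (p q : ℝ) (hp : 1 < p) (hq : 1 < q) (hpq : 1 / p + 1 / q = 1)
    (v : (Fin h → ℝ) → ℝ) (hv_meas : Measurable v) (hv : ∀ x, 0 ≤ v x)
    (C : ℝ) (hC : 0 ≤ C)
    (hbound : ∀ f : (Fin h → ℝ) → ℝ, (∀ x, 0 ≤ f x) →
      MemInter (volume.restrict Ω) p ω f →
      Bornology.IsBounded (Function.support f) →
      (∫ x, v x * f x ∂(volume.restrict Ω)) ≤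
        C * max (∫ x, ω x * f x ∂(volume.restrict Ω))
          ((eLpNorm f (ENNReal.ofReal p) (volume.restrict Ω)).toReal)) :
    MemX (volume.restrict Ω) q ω v ∧
      XNorm (volume.restrict Ω) q ω v ≤ ENNReal.ofReal C := by
  classical
  have hΩm : MeasurableSet Ω := hΩ.measurableSet
  set μ := volume.restrict Ω with hμdef
  have hp0 : 0 < p := lt_trans one_pos hp
  have hq0 : 0 < q := lt_trans one_pos hq
  have hq1 : 0 < q - 1 := by linarith
  set A := Stmt6Aux.Aset v ω with hAdef
  have hAm : ∀ n : ℕ, MeasurableSet (A n) := Stmt6Aux.Aset_meas hv_meas hω_meas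
  have hAfin : ∀ n : ℕ, μ (A n) ≠ ⊤ := fun n => Stmt6Aux.Aset_fin Ω n
  set Z := Stmt6Aux.Zf v ω with hZdef
  have hbv : ∀ n : ℕ, ∀ x ∈ A n, v x ≤ (n:ℝ)+1 := fun n x hx => by
    have h1 : v x ≤ (n:ℝ) := hx.1.1
    linarith
  have hbω : ∀ n : ℕ, ∀ x ∈ A n, ω x ≤ (n:ℝ)+1 := fun n x hx => by
    have h1 : ω x ≤ (n:ℝ) := hx.1.2
    linarith
  have hω0 : ∀ x, 0 ≤ ω x := fun x => le_trans zero_le_one (hω x)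
  -- continuity of the truncated functionals
  have hBc : ∀ n : ℕ, Continuous (fun a => ∫ x in A n, Z a x ^ q ∂μ) := by
    intro n
    have := Stmt6Aux.contInt (μ := μ) hv_meas hω_meas hv hω
      (w := fun _ => (1:ℝ)) measurable_const (fun _ => zero_le_one)
      (hAm n) (hAfin n) (K := (n:ℝ)+1)
      (fun x hx => by show (1:ℝ) ≤ (n:ℝ)+1; have h0 : (0:ℝ) ≤ (n:ℝ) := Nat.cast_nonneg n; linarith)
      (hbv n) (hbω n) hq0
    exact this.congr fun a => by simp only [one_mul]; rfl
  have hIc : ∀ n : ℕ, Continuous (fun a => ∫ x in A n, ω x * Z a x ^ (q-1) ∂μ) :=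
    fun n => Stmt6Aux.contInt (μ := μ) hv_meas hω_meas hv hω
      hω_meas hω0 (hAm n) (hAfin n) (hbω n) (hbv n) (hbω n) hq1
  have hBnn : ∀ (n : ℕ) (a : ℝ), 0 ≤ ∫ x in A n, Z a x ^ q ∂μ := fun n a =>
    integral_nonneg fun x => Real.rpow_nonneg (Stmt6Aux.Zf_nonneg a x) q
  have hMI : ∀ n : ℕ, ∀ a, 0 ≤ a →
      (∫ x in A n, Z a x ^ q ∂μ) + a * (∫ x in A n, ω x * Z a x ^ (q-1) ∂μ)
        ≤ C * max (∫ x in A n, ω x * Z a x ^ (q-1) ∂μ)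
            ((∫ x in A n, Z a x ^ q ∂μ) ^ (1/p)) :=
    fun n a ha => Stmt6Aux.MI Ω hΩm ω hω_meas hω p q hp hq hpq v hv_meas hv C hbound n a ha
  have hex : ∀ n : ℕ, ∃ a, a ∈ Set.Icc 0 C ∧ (∫ x in A n, Z a x ^ q ∂μ) ≤ (C - a)^q :=
    fun n => Stmt6Aux.balance p q C hp hq hC hpq _ _ (hBc n) (hIc n) (hBnn n) (hMI n)
  choose aa haIcc haB using hex
  obtain ⟨a0, ha0I, φ, hφ, hconv⟩ :=
    (isCompact_Icc (a := (0:ℝ)) (b := C)).tendsto_subseq haIcc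
  have ha00 : 0 ≤ a0 := ha0I.1
  have ha0C : a0 ≤ C := ha0I.2
  have hCa : 0 ≤ C - a0 := by linarith
  -- pass to the limit along the subsequence, on each fixed A m
  have L9 : ∀ m : ℕ, (∫ x in A m, Z a0 x ^ q ∂μ) ≤ (C - a0)^q := by
    intro m
    have h1 : Filter.Tendsto (fun k => ∫ x in A m, Z (aa (φ k)) x ^ q ∂μ)
        Filter.atTop (nhds (∫ x in A m, Z a0 x ^ q ∂μ)) :=
      ((hBc m).continuousAt).tendsto.comp hconv
    have h2 : Filter.Tendsto (fun k => (C - aa (φ k))^q) Filter.atTop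
        (nhds ((C - a0)^q)) := by
      have hc : ContinuousAt (fun t : ℝ => (C - t)^q) a0 :=
        (Real.continuousAt_rpow_const (C - a0) q (Or.inr hq0.le)).comp
          ((continuous_const.sub continuous_id).continuousAt)
      exact hc.tendsto.comp hconv
    refine le_of_tendsto_of_tendsto h1 h2 ?_
    filter_upwards [Filter.eventually_ge_atTop m] with k hk
    have hsub : A m ⊆ A (φ k) := Stmt6Aux.Aset_mono (le_trans hk hφ.le_apply)
    refine le_trans ?_ (haB (φ k))
    refine MeasureTheory.setIntegral_mono_set
      (Stmt6Aux.iZq_gen hv_meas hω_meas hv hω Ω (φ k) (haIcc (φ k)).1 hq0.le)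
      (Filter.Eventually.of_forall fun x => Real.rpow_nonneg (Stmt6Aux.Zf_nonneg _ x) q)
      (Filter.Eventually.of_forall hsub)
  -- monotone convergence to the full integral
  have hZqm : Measurable fun x => ENNReal.ofReal (Z a0 x ^ q) := by
    have := Stmt6Aux.Zf_meas hv_meas hω_meas a0
    fun_prop
  have hlin : ∫⁻ x, ENNReal.ofReal (Z a0 x ^ q) ∂μ ≤ ENNReal.ofReal ((C - a0)^q) := by
    have hFsup : ∀ x, (⨆ m : ℕ, (A m).indicator (fun x => ENNReal.ofReal (Z a0 x ^ q)) x)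
        = ENNReal.ofReal (Z a0 x ^ q) := by
      intro x
      refine le_antisymm (iSup_le fun m => ?_) ?_
      · exact Set.indicator_le_self _ _ x
      · obtain ⟨m, hm⟩ := Stmt6Aux.Aset_cover (v := v) (ω := ω) x
        exact le_iSup_of_le m (by rw [Set.indicator_of_mem hm])
    have hmono : Monotone fun m : ℕ =>
        (A m).indicator fun x => ENNReal.ofReal (Z a0 x ^ q) := fun i j hij =>
      Set.indicator_le_indicator_of_subset (Stmt6Aux.Aset_mono hij) (fun _ => zero_le)
    have hcalc : ∫⁻ x, ENNReal.ofReal (Z a0 x ^ q) ∂μ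
        = ⨆ m : ℕ, ∫⁻ x, (A m).indicator (fun x => ENNReal.ofReal (Z a0 x ^ q)) x ∂μ := by
      rw [← MeasureTheory.lintegral_iSup (fun m => hZqm.indicator (hAm m)) hmono]
      exact lintegral_congr fun x => (hFsup x).symm
    rw [hcalc]
    refine iSup_le fun m => ?_
    rw [MeasureTheory.lintegral_indicator (hAm m)]
    rw [← MeasureTheory.ofReal_integral_eq_lintegral_ofReal
      (Stmt6Aux.iZq_gen hv_meas hω_meas hv hω Ω m ha00 hq0.le)
      (Filter.Eventually.of_forall fun x => Real.rpow_nonneg (Stmt6Aux.Zf_nonneg _ x) q)]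
    exact ENNReal.ofReal_le_ofReal (L9 m)
  -- the decomposition
  set w : (Fin h → ℝ) → ℝ := fun x => min (v x) (a0 * ω x) with hwdef
  set z : (Fin h → ℝ) → ℝ := Z a0 with hzdef
  have hsum : v = w + z := by
    funext x
    show v x = min (v x) (a0 * ω x) + max (v x - a0 * ω x) 0
    rcases le_total (v x) (a0 * ω x) with hle | hle
    · rw [min_eq_left hle, max_eq_right (by linarith)]
      ring
    · rw [min_eq_right hle, max_eq_left (by linarith)]
      ring
  have hwm : Measurable fun x => w x / ω x :=
    (hv_meas.min (measurable_const.mul hω_meas)).div hω_meas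
  have hwb : ∀ x, ‖w x / ω x‖ ≤ a0 := by
    intro x
    have hωx : 0 < ω x := lt_of_lt_of_le one_pos (hω x)
    rw [Real.norm_eq_abs, abs_of_nonneg
      (div_nonneg (le_min (hv x) (mul_nonneg ha00 hωx.le)) hωx.le)]
    rw [div_le_iff₀ hωx]
    exact min_le_right _ _
  have hwtop : eLpNorm (fun x => w x / ω x) ⊤ μ ≤ ENNReal.ofReal a0 := by
    rw [MeasureTheory.eLpNorm_exponent_top]
    exact MeasureTheory.eLpNormEssSup_le_of_ae_bound (Filter.Eventually.of_forall hwb)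
  have hQ0 : ENNReal.ofReal q ≠ 0 := by simp [ENNReal.ofReal_eq_zero]; linarith
  have hzq : eLpNorm z (ENNReal.ofReal q) μ ≤ ENNReal.ofReal (C - a0) := by
    rw [MeasureTheory.eLpNorm_eq_lintegral_rpow_enorm_toReal hQ0 ENNReal.ofReal_ne_top,
      ENNReal.toReal_ofReal hq0.le]
    have hpt : ∀ x, ‖z x‖ₑ ^ q = ENNReal.ofReal (Z a0 x ^ q) := by
      intro x
      rw [Real.enorm_eq_ofReal (Stmt6Aux.Zf_nonneg a0 x),
        ENNReal.ofReal_rpow_of_nonneg (Stmt6Aux.Zf_nonneg a0 x) hq0.le]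
    calc (∫⁻ x, ‖z x‖ₑ ^ q ∂μ) ^ (1/q)
        = (∫⁻ x, ENNReal.ofReal (Z a0 x ^ q) ∂μ) ^ (1/q) := by
          rw [lintegral_congr hpt]
      _ ≤ (ENNReal.ofReal ((C - a0)^q)) ^ (1/q) :=
          ENNReal.rpow_le_rpow hlin (by positivity)
      _ = ENNReal.ofReal (((C - a0)^q) ^ (1/q)) :=
          ENNReal.ofReal_rpow_of_nonneg (Real.rpow_nonneg hCa _) (by positivity)
      _ = ENNReal.ofReal (C - a0) := by
          rw [← Real.rpow_mul hCa, mul_one_div_cancel (ne_of_gt hq0), Real.rpow_one]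
  have hwmem : MemLp (fun x => w x / ω x) ⊤ μ :=
    ⟨hwm.aestronglyMeasurable, lt_of_le_of_lt hwtop ENNReal.ofReal_lt_top⟩
  have hzmem : MemLp z (ENNReal.ofReal q) μ :=
    ⟨(Stmt6Aux.Zf_meas hv_meas hω_meas a0).aestronglyMeasurable,
      lt_of_le_of_lt hzq ENNReal.ofReal_lt_top⟩
  constructor
  · exact ⟨w, z, hsum, hwmem, hzmem⟩
  · refine le_trans (sInf_le ⟨w, z, hsum, rfl⟩) ?_
    calc eLpNorm (fun x => w x / ω x) ⊤ μ + eLpNorm z (ENNReal.ofReal q) μ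
        ≤ ENNReal.ofReal a0 + ENNReal.ofReal (C - a0) := add_le_add hwtop hzq
      _ = ENNReal.ofReal C := by
          rw [← ENNReal.ofReal_add ha00 hCa]
          norm_num
end

section
/- Let D ⊆ (0,1) be dense and t ↦ u_t an increasing map from D to L⁰(Ω, 𝔪). Then for every t ∈ (0,1] the left limit u_t⁻ = lim_{s∈D, s↑t} u_s exists in measure, for every t ∈ [0,1) the right limit u_t⁺ exists in measure, for t ∈ D one has u_t⁻ ≤ u_t ≤ u_t⁺, and the set {t ∈ D : u_t⁻ ≠ u_t⁺} is at most countable. -/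
open MeasureTheory Filter

/-- A fixed increasing homeomorphism `ℝ̄ → [-1/2, 1/2]` used to define
convergence in measure for extended-real-valued functions. -/
noncomputable def zeta (y : EReal) : ℝ :=
  if y = ⊤ then 1 / 2 else if y = ⊥ then -1 / 2
  else y.toReal / (2 * Real.sqrt (1 + y.toReal ^ 2))

noncomputable def gg (r : ℝ) : ℝ := r / (2 * Real.sqrt (1 + r ^ 2))

lemma sqrt_pos' (r : ℝ) : 0 < Real.sqrt (1 + r ^ 2) :=
  Real.sqrt_pos.2 (by positivity)

lemma sq_sqrt' (r : ℝ) : (Real.sqrt (1 + r ^ 2)) ^ 2 = 1 + r ^ 2 :=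
  Real.sq_sqrt (by positivity)

lemma zeta_coe (r : ℝ) : zeta (r : EReal) = gg r := by
  simp [zeta, gg]

lemma zeta_top : zeta ⊤ = 1 / 2 := by simp [zeta]
lemma zeta_bot : zeta ⊥ = -(1 / 2) := by norm_num [zeta]

lemma key_ineq {r r' : ℝ} (hr : 0 ≤ r) (h : r < r') :
    r * Real.sqrt (1 + r' ^ 2) < r' * Real.sqrt (1 + r ^ 2) := by
  have ha := sqrt_pos' r
  have hb := sqrt_pos' r'
  have ha2 := sq_sqrt' r
  have hb2 := sq_sqrt' r'
  have hsq : (r * Real.sqrt (1 + r' ^ 2)) ^ 2 < (r' * Real.sqrt (1 + r ^ 2)) ^ 2 := by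
    nlinarith
  exact lt_of_pow_lt_pow_left₀ 2 (mul_nonneg (by linarith) ha.le) hsq

lemma key_ineq' {r r' : ℝ} (h : r < r') :
    r * Real.sqrt (1 + r' ^ 2) < r' * Real.sqrt (1 + r ^ 2) := by
  rcases le_or_gt 0 r with hr | hr
  · exact key_ineq hr h
  · rcases le_or_gt 0 r' with hr' | hr'
    · have h1 : r * Real.sqrt (1 + r' ^ 2) < 0 := mul_neg_of_neg_of_pos hr (sqrt_pos' r')
      have h2 : 0 ≤ r' * Real.sqrt (1 + r ^ 2) := mul_nonneg hr' (sqrt_pos' r).le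
      linarith
    · have := key_ineq (r := -r') (r' := -r) (by linarith) (by linarith)
      have e1 : (-r') ^ 2 = r' ^ 2 := by ring
      have e2 : (-r) ^ 2 = r ^ 2 := by ring
      rw [e1, e2] at this
      linarith

lemma gg_strictMono : StrictMono gg := by
  intro r r' h
  have ha := sqrt_pos' r
  have hb := sqrt_pos' r'
  rw [gg, gg, div_lt_div_iff₀ (by linarith) (by linarith)]
  nlinarith [key_ineq' h]

lemma gg_abs_lt_half (r : ℝ) : |gg r| < 1 / 2 := by
  have ha := sqrt_pos' r
  have ha2 := sq_sqrt' r
  have habs : |r| < Real.sqrt (1 + r ^ 2) := by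
    nlinarith [abs_nonneg r, sq_abs r, sq_nonneg (Real.sqrt (1 + r^2) - |r|)]
  rw [abs_lt] at habs ⊢
  constructor
  · rw [gg, lt_div_iff₀ (by linarith)]; nlinarith
  · rw [gg, div_lt_iff₀ (by linarith)]; nlinarith

lemma zeta_strictMono : StrictMono zeta := by
  intro y y' h
  induction y using EReal.rec with
  | bot =>
    induction y' using EReal.rec with
    | bot => exact absurd h (lt_irrefl _)
    | coe r => rw [zeta_bot, zeta_coe]; linarith [(abs_lt.1 (gg_abs_lt_half r)).1]
    | top => rw [zeta_bot, zeta_top]; norm_num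
  | coe r =>
    induction y' using EReal.rec with
    | bot => exact absurd h (by simp)
    | coe r' =>
      rw [zeta_coe, zeta_coe]; exact gg_strictMono (by exact_mod_cast h)
    | top => rw [zeta_coe, zeta_top]; linarith [(abs_lt.1 (gg_abs_lt_half r)).2]
  | top => exact absurd h (by simp)

lemma zeta_mono : Monotone zeta := zeta_strictMono.monotone

lemma zeta_abs_le_half (y : EReal) : |zeta y| ≤ 1 / 2 := by
  induction y using EReal.rec with
  | bot => rw [zeta_bot, abs_neg, abs_of_nonneg (by norm_num)]
  | coe r => rw [zeta_coe]; exact (gg_abs_lt_half r).le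
  | top => rw [zeta_top, abs_of_nonneg (by norm_num)]

lemma continuous_gg : Continuous gg :=
  Continuous.div continuous_id
    (continuous_const.mul (Real.continuous_sqrt.comp (continuous_const.add (continuous_pow 2))))
    (fun r => by have := sqrt_pos' r; positivity)

lemma gg_tendsto_atTop : Tendsto gg atTop (nhds (1 / 2)) := by
  have h1 : Tendsto (fun r : ℝ => r ^ 2) atTop atTop :=
    tendsto_pow_atTop (by norm_num)
  have h1' : Tendsto (fun r : ℝ => 1 / r ^ 2) atTop (nhds 0) := by
    simpa [one_div, Pi.inv_def] using h1.inv_tendsto_atTop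
  have h2 : Tendsto (fun r : ℝ => 1 / r ^ 2 + 1) atTop (nhds 1) := by
    simpa using h1'.add_const 1
  have h3 : Tendsto (fun r : ℝ => Real.sqrt (1 / r ^ 2 + 1)) atTop (nhds 1) := by
    have := (Real.continuous_sqrt.tendsto 1).comp h2
    simpa [Function.comp_def] using this
  have h4 : Tendsto (fun r : ℝ => 2 * Real.sqrt (1 / r ^ 2 + 1)) atTop (nhds 2) := by
    simpa using h3.const_mul 2
  have key := h4.inv₀ (two_ne_zero)
  have heq : ∀ r : ℝ, 0 < r → gg r = (2 * Real.sqrt (1 / r ^ 2 + 1))⁻¹ := by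
    intro r hr
    have h1 : Real.sqrt (1 + r ^ 2) = r * Real.sqrt (1 / r ^ 2 + 1) := by
      rw [← Real.sqrt_sq hr.le, ← Real.sqrt_mul (by positivity)]
      congr 1
      field_simp
      exact Real.sq_sqrt (by positivity)
    have hs : 0 < Real.sqrt (1 / r ^ 2 + 1) := Real.sqrt_pos.2 (by positivity)
    rw [gg, h1]
    field_simp
  rw [show (1:ℝ)/2 = 2⁻¹ by norm_num]
  refine key.congr' ?_
  filter_upwards [eventually_gt_atTop 0] with r hr
  exact (heq r hr).symm

lemma zeta_neg (y : EReal) : zeta (-y) = - zeta y := by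
  induction y using EReal.rec with
  | bot => rw [show -(⊥:EReal) = ⊤ by rfl, zeta_top, zeta_bot]; ring
  | coe r =>
    rw [← EReal.coe_neg, zeta_coe, zeta_coe, gg, gg]
    rw [show (-r)^2 = r^2 by ring]
    ring
  | top => rw [show -(⊤:EReal) = ⊥ by rfl, zeta_top, zeta_bot]

lemma tendsto_zeta_iSup (c : ℕ → ℝ) (hc : Monotone c) :
    Tendsto (fun n => zeta ((c n : ℝ) : EReal)) atTop
      (nhds (zeta (⨆ n, ((c n : ℝ) : EReal)))) := by
  obtain ⟨a, ha⟩ : ∃ a, (⨆ n, ((c n : ℝ) : EReal)) = a := ⟨_, rfl⟩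
  rw [ha]
  induction a using EReal.rec with
  | bot =>
    exfalso
    have h1 : ((c 0 : ℝ) : EReal) ≤ ⊥ := ha ▸ le_iSup (fun n => ((c n : ℝ) : EReal)) 0
    simp at h1
  | coe L =>
    have hub : ∀ n, c n ≤ L := by
      intro n
      have := le_iSup (fun n => ((c n : ℝ) : EReal)) n
      rw [ha] at this
      exact_mod_cast this
    have hlb : ∀ ε : ℝ, 0 < ε → ∃ n, L - ε < c n := by
      intro ε hε
      by_contra hcon
      push_neg at hcon
      have : (⨆ n, ((c n : ℝ) : EReal)) ≤ ((L - ε : ℝ) : EReal) :=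
        iSup_le fun n => by exact_mod_cast hcon n
      rw [ha] at this
      have : (L : ℝ) ≤ L - ε := by exact_mod_cast this
      linarith
    have hcL : Tendsto c atTop (nhds L) := by
      rw [Metric.tendsto_atTop]
      intro ε hε
      obtain ⟨N, hN⟩ := hlb ε hε
      refine ⟨N, fun n hn => ?_⟩
      have h1 := hc hn
      have h2 := hub n
      rw [Real.dist_eq, abs_lt]
      constructor <;> linarith
    have := (continuous_gg.tendsto L).comp hcL
    simpa [Function.comp_def, zeta_coe] using this
  | top =>
    have hub : ∀ M : ℝ, ∃ n, M < c n := by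
      intro M
      by_contra hcon
      push_neg at hcon
      have : (⨆ n, ((c n : ℝ) : EReal)) ≤ ((M : ℝ) : EReal) :=
        iSup_le fun n => by exact_mod_cast hcon n
      rw [ha] at this
      exact absurd this (by simp)
    have hcT : Tendsto c atTop atTop :=
      tendsto_atTop_atTop_of_monotone hc fun M => (hub M).imp fun n h => h.le
    have := gg_tendsto_atTop.comp hcT
    rw [zeta_top]
    simpa [Function.comp_def, zeta_coe] using this

lemma left_main {α : Type*} [MeasurableSpace α] (μ : Measure α)
    (D : Set ℝ) (hD : D ⊆ Set.Ioo 0 1) (hdense : Set.Ioo (0:ℝ) 1 ⊆ closure D)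
    (u : ℝ → α → ℝ) (hmeas : ∀ t ∈ D, Measurable (u t))
    (hmono : ∀ s ∈ D, ∀ t ∈ D, s ≤ t → ∀ᵐ x ∂μ, u s x ≤ u t x) :
    ∃ um : ℝ → α → EReal,
      (∀ t, Measurable (um t)) ∧
      (∀ t ∈ Set.Ioc (0:ℝ) 1, ∀ F : Set α, MeasurableSet F → μ F < ⊤ →
        ∀ ε : ℝ, 0 < ε →
        Tendsto (fun s => μ (F ∩ {x | ε ≤ |zeta ((u s x : EReal)) - zeta (um t x)|}))
          (nhdsWithin t (D ∩ Set.Iio t)) (nhds 0)) ∧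
      (∀ t ∈ Set.Ioc (0:ℝ) 1, ∀ r ∈ D, r < t → ∀ᵐ x ∂μ, (u r x : EReal) ≤ um t x) ∧
      (∀ t ∈ D, ∀ᵐ x ∂μ, um t x ≤ (u t x : EReal)) := by
  classical
  obtain ⟨D₀, hD₀D, hD₀c, hD₀dense⟩ :=
    (TopologicalSpace.IsSeparable.of_separableSpace D).exists_countable_dense_subset
  have haux : ∀ a b : ℝ, 0 ≤ a → b ≤ 1 → a < b → ∃ s ∈ D₀, a < s ∧ s < b := by
    intro a b ha hb hab
    have hm : (a + b) / 2 ∈ Set.Ioo a b := ⟨by linarith, by linarith⟩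
    have hsub : Set.Ioo a b ⊆ Set.Ioo 0 1 := Set.Ioo_subset_Ioo ha hb
    have h1 : (a + b) / 2 ∈ closure D := hdense (hsub hm)
    obtain ⟨d, hd⟩ := mem_closure_iff.1 h1 _ isOpen_Ioo hm
    have h2 : d ∈ closure D₀ := hD₀dense hd.2
    obtain ⟨s, hs⟩ := mem_closure_iff.1 h2 _ isOpen_Ioo hd.1
    exact ⟨s, hs.2, hs.1.1, hs.1.2⟩
  set G : Set α := {x | ∀ s ∈ D₀, ∀ t ∈ D₀, s ≤ t → u s x ≤ u t x} with hGdef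
  have hGmeas : MeasurableSet G := by
    have hGeq : G = ⋂ s ∈ D₀, ⋂ t ∈ D₀, {x | s ≤ t → u s x ≤ u t x} := by
      ext x
      simp [hGdef, Set.mem_iInter]
    rw [hGeq]
    refine MeasurableSet.biInter hD₀c fun s hs => MeasurableSet.biInter hD₀c fun t ht => ?_
    by_cases hst : s ≤ t
    · have : {x | s ≤ t → u s x ≤ u t x} = {x | u s x ≤ u t x} := by ext x; simp [hst]
      rw [this]
      exact measurableSet_le (hmeas s (hD₀D hs)) (hmeas t (hD₀D ht))
    · have : {x | s ≤ t → u s x ≤ u t x} = Set.univ := by ext x; simp [hst]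
      rw [this]
      exact MeasurableSet.univ
  have hGae : ∀ᵐ x ∂μ, x ∈ G := by
    have : ∀ᵐ x ∂μ, ∀ s ∈ D₀, ∀ t ∈ D₀, s ≤ t → u s x ≤ u t x := by
      rw [ae_ball_iff hD₀c]
      intro s hs
      rw [ae_ball_iff hD₀c]
      intro t ht
      by_cases hst : s ≤ t
      · filter_upwards [hmono s (hD₀D hs) t (hD₀D ht) hst] with x hx
        exact fun _ => hx
      · filter_upwards with x h
        exact absurd h hst
    exact this
  refine ⟨fun t x => ⨆ s : ↥(D₀ ∩ Set.Iio t), ((u s.1 x : ℝ) : EReal), ?_, ?_, ?_, ?_⟩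
  · intro t
    have : Countable ↥(D₀ ∩ Set.Iio t) := (hD₀c.mono Set.inter_subset_left).to_subtype
    exact Measurable.iSup fun s => measurable_coe_real_ereal.comp (hmeas s.1 (hD₀D s.2.1))
  · intro t ht F hF hFfin ε hε
    set um_t : α → EReal := fun x => ⨆ s : ↥(D₀ ∩ Set.Iio t), ((u s.1 x : ℝ) : EReal) with hum_t
    have hum_t_meas : Measurable um_t := by
      have : Countable ↥(D₀ ∩ Set.Iio t) := (hD₀c.mono Set.inter_subset_left).to_subtype
      exact Measurable.iSup fun s => measurable_coe_real_ereal.comp (hmeas s.1 (hD₀D s.2.1))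
    -- monotone sequence approaching t from the left inside D₀
    have hσex : ∀ n : ℕ, ∃ s ∈ D₀, max 0 (t - 1/((n:ℝ)+1)) < s ∧ s < t := by
      intro n
      refine haux _ t (le_max_left _ _) ht.2 ?_
      rw [max_lt_iff]
      refine ⟨ht.1, ?_⟩
      have : (0:ℝ) < 1/((n:ℝ)+1) := by positivity
      linarith
    choose σ' hσ'D₀ hσ'lb hσ'lt using hσex
    set σ : ℕ → ℝ := fun n => (Finset.range (n+1)).sup' (by simp) σ' with hσdef
    have hσmem : ∀ n, σ n ∈ D₀ ∧ σ n < t := by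
      intro n
      obtain ⟨i, _, hieq⟩ :=
        Finset.exists_mem_eq_sup' (by simp : (Finset.range (n+1)).Nonempty) σ'
      have : σ n = σ' i := hieq
      rw [this]
      exact ⟨hσ'D₀ i, hσ'lt i⟩
    have hσmono : Monotone σ := fun m n hmn =>
      Finset.sup'_mono σ' (Finset.range_subset_range.2 (by omega)) (by simp)
    have hσlb : ∀ n : ℕ, t - 1/((n:ℝ)+1) < σ n := by
      intro n
      have h1 : σ' n ≤ σ n := Finset.le_sup' σ' (by simp : n ∈ Finset.range (n+1))
      have h2 := hσ'lb n
      have h3 := le_max_right (0:ℝ) (t - 1/((n:ℝ)+1))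
      linarith
    have hσtendsto : Tendsto σ atTop (nhds t) := by
      refine tendsto_of_tendsto_of_tendsto_of_le_of_le
        (g := fun n : ℕ => t - 1/((n:ℝ)+1)) (h := fun _ => t) ?_ tendsto_const_nhds
        (fun n => (hσlb n).le) (fun n => (hσmem n).2.le)
      have h0 := tendsto_one_div_add_atTop_nhds_zero_nat (𝕜 := ℝ)
      have := (tendsto_const_nhds (x := t) (f := atTop)).sub h0
      simpa using this
    -- convergence of zeta values on G
    have hzeta : ∀ x ∈ G, Tendsto (fun n => zeta ((u (σ n) x : ℝ) : EReal)) atTop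
        (nhds (zeta (um_t x))) := by
      intro x hx
      have hmonu : Monotone fun n => u (σ n) x :=
        fun m n hmn => hx _ (hσmem m).1 _ (hσmem n).1 (hσmono hmn)
      have hsup : um_t x = ⨆ n, ((u (σ n) x : ℝ) : EReal) := by
        apply le_antisymm
        · refine iSup_le fun s => ?_
          obtain ⟨n, hn⟩ : ∃ n, s.1 < σ n := by
            by_contra hcon
            push_neg at hcon
            have hall : ∀ n : ℕ, t - 1/((n:ℝ)+1) ≤ s.1 := fun n => (hσlb n).le.trans (hcon n)
            have hlim : Tendsto (fun n : ℕ => t - 1/((n:ℝ)+1)) atTop (nhds t) := by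
              have h0 := tendsto_one_div_add_atTop_nhds_zero_nat (𝕜 := ℝ)
              have := (tendsto_const_nhds (x := t) (f := atTop)).sub h0
              simpa using this
            have := le_of_tendsto hlim (Eventually.of_forall hall)
            exact absurd s.2.2 (not_lt.2 this)
          have h1 : u s.1 x ≤ u (σ n) x := hx s.1 s.2.1 (σ n) (hσmem n).1 hn.le
          exact le_trans (by exact_mod_cast h1) (le_iSup (fun n => ((u (σ n) x : ℝ) : EReal)) n)
        · exact iSup_le fun n => le_iSup_of_le ⟨σ n, (hσmem n).1, (hσmem n).2⟩ le_rfl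
      rw [hsup]
      exact tendsto_zeta_iSup _ hmonu
    set Gn : ℕ → Set α :=
      fun n => F ∩ {x | ε ≤ zeta (um_t x) - zeta ((u (σ n) x : ℝ) : EReal)} ∩ G with hGn
    have hGnmeas : ∀ n, MeasurableSet (Gn n) := by
      intro n
      refine (hF.inter ?_).inter hGmeas
      have h1 : Measurable fun x => zeta (um_t x) - zeta ((u (σ n) x : ℝ) : EReal) :=
        ((zeta_mono.measurable).comp hum_t_meas).sub
          ((zeta_mono.measurable).comp
            (measurable_coe_real_ereal.comp (hmeas _ (hD₀D (hσmem n).1))))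
      exact measurableSet_le measurable_const h1
    have hGnanti : Antitone Gn := by
      intro m n hmn x hx
      obtain ⟨⟨hxF, hxe⟩, hxG⟩ := hx
      refine ⟨⟨hxF, ?_⟩, hxG⟩
      have h1 : u (σ m) x ≤ u (σ n) x := hxG _ (hσmem m).1 _ (hσmem n).1 (hσmono hmn)
      have h2 : zeta ((u (σ m) x : ℝ) : EReal) ≤ zeta ((u (σ n) x : ℝ) : EReal) :=
        zeta_mono (by exact_mod_cast h1)
      simp only [Set.mem_setOf_eq] at hxe ⊢
      linarith
    have hGnempty : (⋂ n, Gn n) = ∅ := by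
      rw [Set.eq_empty_iff_forall_notMem]
      intro x hx
      have hxG : x ∈ G := (Set.mem_iInter.1 hx 0).2
      have hxe : ∀ n, ε ≤ zeta (um_t x) - zeta ((u (σ n) x : ℝ) : EReal) :=
        fun n => (Set.mem_iInter.1 hx n).1.2
      have hlim := hzeta x hxG
      have hb : ∀ n, zeta ((u (σ n) x : ℝ) : EReal) ≤ zeta (um_t x) - ε :=
        fun n => by linarith [hxe n]
      have hle := le_of_tendsto hlim (Eventually.of_forall hb)
      linarith
    have hμG : Tendsto (fun n => μ (Gn n)) atTop (nhds 0) := by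
      have h0 : μ (Gn 0) ≠ ⊤ := by
        refine (lt_of_le_of_lt (measure_mono ?_) hFfin).ne
        intro x hx
        exact hx.1.1
      have := tendsto_measure_iInter_atTop (μ := μ)
        (fun n => (hGnmeas n).nullMeasurableSet) hGnanti ⟨0, h0⟩
      rw [hGnempty] at this
      simpa [Function.comp_def] using this
    rw [ENNReal.tendsto_nhds_zero]
    intro δ hδ
    obtain ⟨n, hn⟩ := (ENNReal.tendsto_nhds_zero.1 hμG δ hδ).exists
    have hev : ∀ᶠ s in nhdsWithin t (D ∩ Set.Iio t), σ n < s ∧ s ∈ D ∩ Set.Iio t :=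
      ((eventually_gt_nhds (hσmem n).2).filter_mono nhdsWithin_le_nhds).and
        eventually_mem_nhdsWithin
    filter_upwards [hev] with s hs
    obtain ⟨hσs, hsD, hst⟩ := hs
    refine le_trans ?_ hn
    obtain ⟨s', hs'D₀, hss', hs't⟩ := haux s t (hD hsD).1.le ht.2 hst
    refine measure_mono_ae ?_
    filter_upwards [hGae, hmono (σ n) (hD₀D (hσmem n).1) s hsD hσs.le,
      hmono s hsD s' (hD₀D hs'D₀) hss'.le] with x hxG h1 h2 hmem
    obtain ⟨hxF, hxe⟩ := hmem
    refine ⟨⟨hxF, ?_⟩, hxG⟩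
    have hb1 : zeta ((u (σ n) x : ℝ) : EReal) ≤ zeta ((u s x : ℝ) : EReal) :=
      zeta_mono (by exact_mod_cast h1)
    have hb2 : zeta ((u s x : ℝ) : EReal) ≤ zeta ((u s' x : ℝ) : EReal) :=
      zeta_mono (by exact_mod_cast h2)
    have hb3 : ((u s' x : ℝ) : EReal) ≤ um_t x :=
      le_iSup_of_le ⟨s', hs'D₀, hs't⟩ le_rfl
    have hb3' := zeta_mono hb3
    simp only [Set.mem_setOf_eq] at hxe ⊢
    rw [abs_sub_comm, abs_of_nonneg (by linarith)] at hxe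
    linarith
  · intro t ht r hr hrt
    obtain ⟨r'', hr''D₀, hrr'', hr''t⟩ := haux r t (hD hr).1.le ht.2 hrt
    filter_upwards [hmono r hr r'' (hD₀D hr''D₀) hrr''.le] with x hx
    refine le_trans (by exact_mod_cast hx : ((u r x : ℝ) : EReal) ≤ ((u r'' x : ℝ) : EReal)) ?_
    exact le_iSup_of_le ⟨r'', hr''D₀, hr''t⟩ le_rfl
  · intro t htD
    have hcnt : (D₀ ∩ Set.Iio t).Countable := hD₀c.mono Set.inter_subset_left
    have hae : ∀ᵐ x ∂μ, ∀ s ∈ D₀ ∩ Set.Iio t, u s x ≤ u t x := by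
      rw [ae_ball_iff hcnt]
      intro s hs
      exact hmono s (hD₀D hs.1) t htD hs.2.le
    filter_upwards [hae] with x hx
    exact iSup_le fun s => by exact_mod_cast hx s.1 s.2


/-- an increasing map `t ↦ u_t` from a dense `D ⊆ (0,1)` to
`L⁰(Ω,𝔪)` has one-sided limits in measure `u_t⁻` (for `t ∈ (0,1]`) and
`u_t⁺` (for `t ∈ [0,1)`), with `u_t⁻ ≤ u_t ≤ u_t⁺` on `D` and
`u_t⁻ = u_t⁺` off an at most countable set. -/
theorem stmt8 {α : Type*} [MeasurableSpace α] [TopologicalSpace α]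
    [PolishSpace α] [BorelSpace α]
    (μ : Measure α) [SigmaFinite μ]
    (D : Set ℝ) (hD : D ⊆ Set.Ioo 0 1) (hdense : Set.Ioo (0:ℝ) 1 ⊆ closure D)
    (u : ℝ → α → ℝ) (hmeas : ∀ t ∈ D, Measurable (u t))
    (hmono : ∀ s ∈ D, ∀ t ∈ D, s ≤ t → ∀ᵐ x ∂μ, u s x ≤ u t x) :
    ∃ um up : ℝ → α → EReal,
      (∀ t ∈ Set.Ioc (0:ℝ) 1, ∀ F : Set α, MeasurableSet F → μ F < ⊤ →
        ∀ ε : ℝ, 0 < ε →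
        Tendsto (fun s => μ (F ∩ {x | ε ≤ |zeta ((u s x : EReal)) - zeta (um t x)|}))
          (nhdsWithin t (D ∩ Set.Iio t)) (nhds 0)) ∧
      (∀ t ∈ Set.Ico (0:ℝ) 1, ∀ F : Set α, MeasurableSet F → μ F < ⊤ →
        ∀ ε : ℝ, 0 < ε →
        Tendsto (fun s => μ (F ∩ {x | ε ≤ |zeta ((u s x : EReal)) - zeta (up t x)|}))
          (nhdsWithin t (D ∩ Set.Ioi t)) (nhds 0)) ∧
      (∀ t ∈ D, ∀ᵐ x ∂μ, um t x ≤ (u t x : EReal) ∧ (u t x : EReal) ≤ up t x) ∧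
      Set.Countable {t ∈ D | ¬ (um t =ᵐ[μ] up t)} := by
  classical
  obtain ⟨um, hum_meas, hum_tendsto, hum_lb, hum_ub⟩ := left_main μ D hD hdense u hmeas hmono
  set D' : Set ℝ := (fun r => 1 - r) '' D with hD'
  set u' : ℝ → α → ℝ := fun s x => -(u (1 - s) x) with hu'
  have hD'sub : D' ⊆ Set.Ioo 0 1 := by
    rintro _ ⟨r, hr, rfl⟩
    obtain ⟨h1, h2⟩ := hD hr
    rw [Set.mem_Ioo, show (fun r : ℝ => 1 - r) r = 1 - r from rfl]
    constructor <;> linarith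
  have hD'dense : Set.Ioo (0:ℝ) 1 ⊆ closure D' := by
    intro y hy
    have h1 : (1 - y) ∈ closure D := hdense ⟨by linarith [hy.2], by linarith [hy.1]⟩
    have hcont : Continuous fun r : ℝ => 1 - r := by continuity
    have h2 := image_closure_subset_closure_image (f := fun r : ℝ => 1 - r) hcont (s := D)
    have h3 : (1:ℝ) - (1 - y) ∈ (fun r : ℝ => 1 - r) '' closure D := ⟨1 - y, h1, rfl⟩
    have h4 := h2 h3
    rw [show (1:ℝ) - (1 - y) = y by ring] at h4
    exact h4
  have hmeas' : ∀ t ∈ D', Measurable (u' t) := by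
    rintro _ ⟨r, hr, rfl⟩
    have e1 : (1:ℝ) - (1 - r) = r := by ring
    simp only [hu', e1]
    exact (hmeas r hr).neg
  have hmono' : ∀ s ∈ D', ∀ t ∈ D', s ≤ t → ∀ᵐ x ∂μ, u' s x ≤ u' t x := by
    rintro _ ⟨r, hr, rfl⟩ _ ⟨p, hp, rfl⟩ hle
    have hle' : 1 - r ≤ 1 - p := hle
    have hpr : p ≤ r := by linarith
    filter_upwards [hmono p hp r hr hpr] with x hx
    have e1 : (1:ℝ) - (1 - r) = r := by ring
    have e2 : (1:ℝ) - (1 - p) = p := by ring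
    simp only [hu', e1, e2]
    linarith
  obtain ⟨um', hum'_meas, hum'_tendsto, hum'_lb, hum'_ub⟩ :=
    left_main μ D' hD'sub hD'dense u' hmeas' hmono'
  set up : ℝ → α → EReal := fun t x => -(um' (1 - t) x) with hup
  -- basic facts about up
  have hup_eq : ∀ t x, um' (1 - t) x = -(up t x) := by
    intro t x
    simp [hup]
  -- a.e. two-sided bound on D
  have hboth : ∀ t ∈ D, ∀ᵐ x ∂μ, um t x ≤ (u t x : EReal) ∧ (u t x : EReal) ≤ up t x := by
    intro t ht
    have h1t : (1 - t) ∈ D' := ⟨t, ht, rfl⟩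
    filter_upwards [hum_ub t ht, hum'_ub (1 - t) h1t] with x hx1 hx2
    refine ⟨hx1, ?_⟩
    have e1 : (1:ℝ) - (1 - t) = t := by ring
    simp only [hu', e1] at hx2
    rw [EReal.coe_neg] at hx2
    rw [hup_eq t x] at hx2
    -- hx2 : -(up t x) ≤ -(u t x : EReal)
    exact EReal.neg_le_neg_iff.1 hx2
  -- up is below u r for r ∈ D to the right
  have hup_le : ∀ t ∈ Set.Ico (0:ℝ) 1, ∀ r ∈ D, t < r → ∀ᵐ x ∂μ, up t x ≤ (u r x : EReal) := by
    intro t ht r hr htr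
    have h1t : (1 - t) ∈ Set.Ioc (0:ℝ) 1 := ⟨by linarith [ht.2], by linarith [ht.1]⟩
    have h1 := hum'_lb (1 - t) h1t (1 - r) ⟨r, hr, rfl⟩ (by linarith)
    filter_upwards [h1] with x hx
    have e1 : (1:ℝ) - (1 - r) = r := by ring
    simp only [hu', e1] at hx
    rw [EReal.coe_neg, hup_eq t x] at hx
    exact EReal.neg_le_neg_iff.1 hx
  -- density of D inside subintervals
  have hDbtwn : ∀ a b : ℝ, 0 ≤ a → b ≤ 1 → a < b → ∃ r ∈ D, a < r ∧ r < b := by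
    intro a b ha hb hab
    have hm : (a + b) / 2 ∈ Set.Ioo a b := ⟨by linarith, by linarith⟩
    have h1 : (a + b) / 2 ∈ closure D := hdense (Set.Ioo_subset_Ioo ha hb hm)
    obtain ⟨d, hd⟩ := mem_closure_iff.1 h1 _ isOpen_Ioo hm
    exact ⟨d, hd.2, hd.1.1, hd.1.2⟩
  refine ⟨um, up, fun t ht => hum_tendsto t ht, ?_, hboth, ?_⟩
  · -- right limits
    intro t ht F hF hFfin ε hε
    have h1t : (1 - t) ∈ Set.Ioc (0:ℝ) 1 := ⟨by linarith [ht.2], by linarith [ht.1]⟩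
    have hT := hum'_tendsto (1 - t) h1t F hF hFfin ε hε
    have hmap : Tendsto (fun s : ℝ => 1 - s) (nhdsWithin t (D ∩ Set.Ioi t))
        (nhdsWithin (1 - t) (D' ∩ Set.Iio (1 - t))) := by
      refine tendsto_nhdsWithin_of_tendsto_nhds_of_eventually_within _ ?_ ?_
      · exact ((continuous_const.sub continuous_id).tendsto t).mono_left nhdsWithin_le_nhds
      · filter_upwards [eventually_mem_nhdsWithin] with s hs
        exact ⟨⟨s, hs.1, rfl⟩, by simpa [Set.mem_Iio] using hs.2⟩
    have hcomp := hT.comp hmap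
    refine Tendsto.congr (fun s => ?_) hcomp
    simp only [Function.comp_apply]
    congr 1
    ext x
    have e1 : (1:ℝ) - (1 - s) = s := by ring
    simp only [hu', e1, Set.mem_inter_iff, Set.mem_setOf_eq]
    rw [EReal.coe_neg, zeta_neg, hup_eq t x, zeta_neg]
    rw [show -zeta ((u s x : ℝ) : EReal) - -zeta (up t x)
        = -(zeta ((u s x : ℝ) : EReal) - zeta (up t x)) by ring, abs_neg]
  · -- countability
    obtain ⟨ν, hνfin, hμν, hνμ⟩ := exists_isFiniteMeasure_absolutelyContinuous μ
    have hup_meas : ∀ t, Measurable (up t) := fun t => (hum'_meas (1 - t)).neg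
    have hint_um : ∀ t, Integrable (fun x => zeta (um t x)) ν := by
      intro t
      refine Integrable.mono' (integrable_const (1/2 : ℝ))
        ((zeta_mono.measurable.comp (hum_meas t)).aestronglyMeasurable) ?_
      exact Eventually.of_forall fun x => zeta_abs_le_half _
    have hint_up : ∀ t, Integrable (fun x => zeta (up t x)) ν := by
      intro t
      refine Integrable.mono' (integrable_const (1/2 : ℝ))
        ((zeta_mono.measurable.comp (hup_meas t)).aestronglyMeasurable) ?_
      exact Eventually.of_forall fun x => zeta_abs_le_half _
    set φ : ℝ → ℝ := fun t => ∫ x, zeta (um t x) ∂ν with hφ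
    set ψ : ℝ → ℝ := fun t => ∫ x, zeta (up t x) ∂ν with hψ
    have hlink : ∀ s ∈ D, ∀ t ∈ D, s < t → ∀ᵐ x ∂ν, up s x ≤ um t x := by
      intro s hs t htt hst
      obtain ⟨r, hrD, hsr, hrt⟩ := hDbtwn s t (hD hs).1.le (hD htt).2.le hst
      have h1 := hup_le s ⟨(hD hs).1.le, (hD hs).2⟩ r hrD hsr
      have h2 := hum_lb t ⟨(hD htt).1, (hD htt).2.le⟩ r hrD hrt
      have h3 : ∀ᵐ x ∂μ, up s x ≤ um t x := by
        filter_upwards [h1, h2] with x hx1 hx2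
        exact hx1.trans hx2
      exact hνμ.ae_le h3
    set B := {t | t ∈ D ∧ ¬ um t =ᵐ[μ] up t} with hB
    have hκ : ∀ t ∈ B, φ t < ψ t := by
      intro t htB
      obtain ⟨htD, hne⟩ := htB
      set f : α → ℝ := fun x => zeta (up t x) - zeta (um t x) with hf
      have hint : Integrable f ν := (hint_up t).sub (hint_um t)
      have hnn : 0 ≤ᵐ[ν] f := by
        filter_upwards [hνμ.ae_le (hboth t htD)] with x hx
        have := zeta_mono (hx.1.trans hx.2)
        simp only [hf, Pi.zero_apply]
        linarith
      have hposμ : μ {x | um t x < up t x} ≠ 0 := by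
        intro h0
        apply hne
        have h1 : ∀ᵐ x ∂μ, um t x ≤ up t x :=
          (hboth t htD).mono fun x hx => hx.1.trans hx.2
        have h2 : ∀ᵐ x ∂μ, ¬ (um t x < up t x) := by
          rw [ae_iff]
          simpa using h0
        filter_upwards [h1, h2] with x hx1 hx2
        exact le_antisymm hx1 (not_lt.1 hx2)
      have hposν : ν {x | um t x < up t x} ≠ 0 := fun h0 => hposμ (hμν h0)
      have hsupp : {x | um t x < up t x} ⊆ Function.support f := by
        intro x hx
        have hzx := zeta_strictMono hx
        simp only [Function.mem_support, hf]
        intro hcon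
        linarith
      have hpos : 0 < ν (Function.support f) :=
        lt_of_lt_of_le (pos_iff_ne_zero.2 hposν) (measure_mono hsupp)
      have hposint := (integral_pos_iff_support_of_nonneg_ae hnn hint).2 hpos
      have heq : ∫ x, f x ∂ν = ψ t - φ t := integral_sub (hint_up t) (hint_um t)
      rw [heq] at hposint
      linarith
    have hmono2 : ∀ s ∈ B, ∀ t ∈ B, s < t → ψ s ≤ φ t := by
      intro s hs t htt hst
      refine integral_mono_ae (hint_up s) (hint_um t) ?_
      filter_upwards [hlink s hs.1 t htt.1 hst] with x hx
      exact zeta_mono hx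
    have hq : ∀ t ∈ B, ∃ qq : ℚ, φ t < qq ∧ (qq : ℝ) < ψ t := fun t ht =>
      exists_rat_btwn (hκ t ht)
    choose! q hq1 hq2 using hq
    have hinj : Set.InjOn q B := by
      intro s hs t htt heq
      by_contra hne
      rcases lt_or_gt_of_ne hne with h | h
      · have hle := hmono2 s hs t htt h
        have h1 := hq2 s hs
        have h2 := hq1 t htt
        rw [heq] at h1
        linarith
      · have hle := hmono2 t htt s hs h
        have h1 := hq2 t htt
        have h2 := hq1 s hs
        rw [heq] at h2
        linarith
    have hcnt : Countable ↥B := by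
      have hqinj : Function.Injective (fun b : ↥B => q b.1) := by
        intro b1 b2 hbe
        exact Subtype.ext (hinj b1.2 b2.2 hbe)
      exact hqinj.countable
    exact Set.countable_coe_iff.1 hcnt
end

section
/- If β ∈ X^q(Q) = L^q(Q) + L^∞_{1/κ}(Q) with κ(x) = 1 + |x|², then the map t ↦ B(t,·), where B(t,x) = ∫_{1/2}^t β(s,x) ds, is (1/p)-Hölder continuous from [0,1] into X^q(ℝᵈ); indeed ‖B(t,·) - B(s,·)‖_{X^q(ℝᵈ)} ≤ (t-s)^{1/p} ‖β‖_{X^q(Q)} for 0 ≤ s ≤ t ≤ 1. -/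
set_option maxHeartbeats 1000000


open MeasureTheory

/-- The space-time cylinder `Q = (0,1) × ℝᵈ`. -/
def Qset (d : ℕ) : Set (ℝ × (Fin d → ℝ)) := Set.Ioo (0:ℝ) 1 ×ˢ Set.univ

lemma clamp_abs_le (b M : ℝ) (hM : 0 ≤ M) : |max (-M) (min b M)| ≤ M := by
  rw [abs_le]
  exact ⟨le_max_left _ _, max_le (by linarith) (min_le_right _ _)⟩

lemma clamp_close (b wv M : ℝ) (hw : |wv| ≤ M) :
    |b - max (-M) (min b M)| ≤ |b - wv| := by
  have hM : 0 ≤ M := le_trans (abs_nonneg _) hw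
  rcases abs_le.1 hw with ⟨h1, h2⟩
  rcases le_total b M with hbM | hbM
  · rcases le_total (-M) b with h | h
    · rw [min_eq_left hbM, max_eq_right h]; simp [abs_nonneg]
    · rw [min_eq_left hbM, max_eq_left h]
      rw [abs_of_nonpos (by linarith), abs_of_nonpos (by linarith)]; linarith
  · rw [min_eq_right hbM, max_eq_right (by linarith)]
    rw [abs_of_nonneg (by linarith), abs_of_nonneg (by linarith)]; linarith

theorem stmt13 (d : ℕ) (p q : ℝ) (hp : 1 < p) (hq : 1 < q)
    (hpq : 1 / p + 1 / q = 1)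
    (β : ℝ × (Fin d → ℝ) → ℝ) (hβ_meas : Measurable β)
    (hβt : ∀ x : Fin d → ℝ,
      MemLp (fun s => β (s, x)) (ENNReal.ofReal q) (volume.restrict (Set.Ioo (0:ℝ) 1)))
    (hβX : MemX (volume.restrict (Qset d)) q (fun z => 1 + ∑ i, z.2 i ^ 2) β) :
    ∀ s t : ℝ, 0 ≤ s → s ≤ t → t ≤ 1 →
      XNorm (volume : Measure (Fin d → ℝ)) q (fun x => 1 + ∑ i, x i ^ 2)
          (fun x => ∫ r in s..t, β (r, x)) ≤
        ENNReal.ofReal ((t - s) ^ (1 / p)) *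
          XNorm (volume.restrict (Qset d)) q (fun z => 1 + ∑ i, z.2 i ^ 2) β := by
  intro s t hs hst ht1
  have hp0 : (0:ℝ) < p := lt_trans one_pos hp
  have hq0 : (0:ℝ) < q := lt_trans one_pos hq
  have hq_ne : q ≠ 0 := hq0.ne'
  set qe : ENNReal := ENNReal.ofReal q with hqe
  have hqe_toReal : qe.toReal = q := ENNReal.toReal_ofReal hq0.le
  have hqe1 : 1 ≤ qe := ENNReal.one_le_ofReal.2 hq.le
  have hqe0 : qe ≠ 0 := (ENNReal.ofReal_pos.2 hq0).ne'
  have hqetop : qe ≠ ⊤ := ENNReal.ofReal_ne_top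
  rcases eq_or_lt_of_le hst with rfl | hlt
  · -- trivial case s = t
    have hB : (fun x : Fin d → ℝ => ∫ r in s..s, β (r, x)) =
        (fun _ => (0:ℝ)) + (fun _ => (0:ℝ)) := by
      funext x; simp
    refine le_trans (le_trans (sInf_le ⟨_, _, hB, rfl⟩) ?_) zero_le
    have h0 : (fun x : Fin d → ℝ => (0:ℝ) / (1 + ∑ i, x i ^ 2)) = fun _ => (0:ℝ) := by
      funext x; simp
    rw [h0]
    have hzf : (fun _ : Fin d → ℝ => (0:ℝ)) = (0 : (Fin d → ℝ) → ℝ) := rfl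
    rw [hzf, eLpNorm_zero, eLpNorm_zero, add_zero]
  -- main case s < t
  set μQ := volume.restrict (Qset d) with hμQ
  set C := ENNReal.ofReal ((t - s) ^ (1 / p)) with hC
  have hts0 : 0 < t - s := sub_pos.2 hlt
  have hts1 : t - s ≤ 1 := by linarith
  have hC0 : C ≠ 0 := (ENNReal.ofReal_pos.2 (Real.rpow_pos_of_pos hts0 _)).ne'
  have hCtop : C ≠ ⊤ := ENNReal.ofReal_ne_top
  have hωpos : ∀ x : Fin d → ℝ, 0 < 1 + ∑ i, x i ^ 2 := fun x => by positivity
  have key : ∀ c ∈ {c : ENNReal | ∃ w z : ℝ × (Fin d → ℝ) → ℝ, β = w + z ∧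
      c = eLpNorm (fun zz => w zz / (1 + ∑ i, zz.2 i ^ 2)) ⊤ μQ + eLpNorm z qe μQ},
      XNorm (volume : Measure (Fin d → ℝ)) q (fun x => 1 + ∑ i, x i ^ 2)
        (fun x => ∫ r in s..t, β (r, x)) ≤ C * c := by
    rintro c ⟨w, z, hsum, rfl⟩
    set A := eLpNorm (fun zz : ℝ × (Fin d → ℝ) => w zz / (1 + ∑ i, zz.2 i ^ 2)) ⊤ μQ with hA
    by_cases hAtop : A = ⊤
    · rw [hAtop]
      have : C * (⊤ + eLpNorm z qe μQ) = ⊤ := by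
        rw [top_add, ENNReal.mul_top hC0]
      rw [this]; exact le_top
    by_cases hztop : eLpNorm z qe μQ = ⊤
    · rw [hztop]
      have : C * (A + ⊤) = ⊤ := by
        rw [add_top, ENNReal.mul_top hC0]
      rw [this]; exact le_top
    set Ar := A.toReal with hAr
    have hAr0 : 0 ≤ Ar := ENNReal.toReal_nonneg
    set w' : ℝ × (Fin d → ℝ) → ℝ := fun zz =>
      max (-(Ar * (1 + ∑ i, zz.2 i ^ 2))) (min (β zz) (Ar * (1 + ∑ i, zz.2 i ^ 2))) with hw'
    set z' : ℝ × (Fin d → ℝ) → ℝ := fun zz => β zz - w' zz with hz'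
    have hM_meas : Measurable fun zz : ℝ × (Fin d → ℝ) => Ar * (1 + ∑ i, zz.2 i ^ 2) := by
      fun_prop
    have hw'_meas : Measurable w' := (hM_meas.neg).max (hβ_meas.min hM_meas)
    have hz'_meas : Measurable z' := hβ_meas.sub hw'_meas
    have hw'_bd : ∀ zz : ℝ × (Fin d → ℝ), |w' zz| ≤ Ar * (1 + ∑ i, zz.2 i ^ 2) := by
      intro zz
      exact clamp_abs_le _ _ (by positivity)
    -- a.e. comparison |z'| ≤ |z|
    have hz'_le : ∀ᵐ zz ∂μQ, |z' zz| ≤ |z zz| := by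
      have h1 : ∀ᵐ zz ∂μQ, (‖w zz / (1 + ∑ i, zz.2 i ^ 2)‖₊ : ENNReal) ≤ A := by
        rw [hA, eLpNorm_exponent_top]; exact ae_le_eLpNormEssSup
      filter_upwards [h1] with zz hzz
      have hωz : 0 < 1 + ∑ i, zz.2 i ^ 2 := hωpos zz.2
      have hwle : |w zz| ≤ Ar * (1 + ∑ i, zz.2 i ^ 2) := by
        have h2 : ‖w zz / (1 + ∑ i, zz.2 i ^ 2)‖ ≤ Ar := by
          have := ENNReal.toReal_mono hAtop hzz
          simpa [coe_nnnorm] using this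
        rw [Real.norm_eq_abs, abs_div, abs_of_pos hωz, div_le_iff₀ hωz] at h2
        linarith [h2]
      have hβzz : β zz = w zz + z zz := by
        have := congrFun hsum zz; simpa using this
      have hcc := clamp_close (β zz) (w zz) (Ar * (1 + ∑ i, zz.2 i ^ 2)) hwle
      have : |z' zz| = |β zz - w' zz| := by rw [hz']
      rw [this]
      have hzz' : β zz - w zz = z zz := by linarith [hβzz]
      calc |β zz - w' zz| ≤ |β zz - w zz| := hcc
        _ = |z zz| := by rw [hzz']
    -- integrability in time
    haveI hfin : IsFiniteMeasure ((volume : Measure ℝ).restrict (Set.Ioo (0:ℝ) 1)) := by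
      constructor
      rw [Measure.restrict_apply_univ, Real.volume_Ioo]
      exact ENNReal.ofReal_lt_top
    have hIocIoo : (volume : Measure ℝ).restrict (Set.Ioc s t) = volume.restrict (Set.Ioo s t) :=
      (Measure.restrict_congr_set Ioo_ae_eq_Ioc).symm
    have hw'_int : ∀ x, IntervalIntegrable (fun r => w' (r, x)) volume s t := by
      intro x
      rw [intervalIntegrable_iff_integrableOn_Ioc_of_le hst]
      refine Integrable.mono' (integrable_const (Ar * (1 + ∑ i, x i ^ 2))) ?_ ?_
      · exact (hw'_meas.comp (measurable_id.prodMk measurable_const)).aestronglyMeasurable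
      · exact ae_of_all _ fun r => by simpa [Real.norm_eq_abs] using hw'_bd (r, x)
    have hβ_int : ∀ x, IntervalIntegrable (fun r => β (r, x)) volume s t := by
      intro x
      rw [intervalIntegrable_iff_integrableOn_Ioc_of_le hst]
      have h1 : IntegrableOn (fun r => β (r, x)) (Set.Ioo (0:ℝ) 1) volume :=
        (hβt x).integrable hqe1
      have h2 : IntegrableOn (fun r => β (r, x)) (Set.Ioo s t) volume :=
        h1.mono_set (Set.Ioo_subset_Ioo hs ht1)
      rw [IntegrableOn, hIocIoo]
      exact h2
    have hz'_int : ∀ x, IntervalIntegrable (fun r => z' (r, x)) volume s t := by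
      intro x
      exact (hβ_int x).sub (hw'_int x)
    set W : (Fin d → ℝ) → ℝ := fun x => ∫ r in s..t, w' (r, x) with hW
    set Z : (Fin d → ℝ) → ℝ := fun x => ∫ r in s..t, z' (r, x) with hZ
    have hBWZ : (fun x : Fin d → ℝ => ∫ r in s..t, β (r, x)) = W + Z := by
      funext x
      rw [Pi.add_apply, hW, hZ, ← intervalIntegral.integral_add (hw'_int x) (hz'_int x)]
      refine intervalIntegral.integral_congr fun r _ => ?_
      simp [hz']
    refine le_trans (sInf_le ⟨W, Z, hBWZ, rfl⟩) ?_
    -- L∞ part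
    have hp1le : 1 / p ≤ 1 := by rw [div_le_one hp0]; exact hp.le
    have hts_pow : t - s ≤ (t - s) ^ (1 / p) := by
      nth_rewrite 1 [← Real.rpow_one (t - s)]
      exact Real.rpow_le_rpow_of_exponent_ge hts0 hts1 hp1le
    have hWbd : eLpNorm (fun x : Fin d → ℝ => W x / (1 + ∑ i, x i ^ 2)) ⊤
        (volume : Measure (Fin d → ℝ)) ≤ C * A := by
      rw [eLpNorm_exponent_top]
      have hb : ∀ x : Fin d → ℝ, ‖W x / (1 + ∑ i, x i ^ 2)‖ ≤ (t - s) ^ (1 / p) * Ar := by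
        intro x
        have h1 : ‖W x‖ ≤ Ar * (1 + ∑ i, x i ^ 2) * |t - s| := by
          rw [hW]
          exact intervalIntegral.norm_integral_le_of_norm_le_const
            (fun r _ => by simpa [Real.norm_eq_abs] using hw'_bd (r, x))
        rw [abs_of_pos hts0] at h1
        rw [Real.norm_eq_abs, abs_div, abs_of_pos (hωpos x), div_le_iff₀ (hωpos x)]
        rw [Real.norm_eq_abs] at h1
        have h2 := mul_le_mul_of_nonneg_left hts_pow
          (show (0:ℝ) ≤ Ar * (1 + ∑ i, x i ^ 2) by positivity)
        nlinarith [h1, h2]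
      refine le_trans (eLpNormEssSup_le_of_ae_bound (ae_of_all _ hb)) ?_
      rw [ENNReal.ofReal_mul (by positivity), hC, hAr, ENNReal.ofReal_toReal hAtop]
    -- Lq part
    have hzz' : eLpNorm z' qe μQ ≤ eLpNorm z qe μQ := by
      refine eLpNorm_mono_ae ?_
      filter_upwards [hz'_le] with zz h
      simpa [Real.norm_eq_abs] using h
    have hZbd : eLpNorm Z qe (volume : Measure (Fin d → ℝ)) ≤ C * eLpNorm z' qe μQ := by
      set ν := (volume : Measure ℝ).restrict (Set.Ioo s t) with hν
      have hZ1 : ∀ x : Fin d → ℝ, (‖Z x‖₊ : ENNReal) ≤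
          C * (∫⁻ r, (‖z' (r, x)‖₊ : ENNReal) ^ q ∂ν) ^ (1 / q) := by
        intro x
        have e1 : Z x = ∫ r, z' (r, x) ∂ν := by
          show (∫ r in s..t, z' (r, x)) = ∫ r, z' (r, x) ∂ν
          rw [intervalIntegral.integral_of_le hst, hIocIoo]
        have e2 : (‖Z x‖₊ : ENNReal) ≤ ∫⁻ r, (‖z' (r, x)‖₊ : ENNReal) ∂ν := by
          rw [e1]; exact enorm_integral_le_lintegral_enorm _
        have hmeas : AEStronglyMeasurable (fun r => z' (r, x)) ν :=
          (hz'_meas.comp (measurable_id.prodMk measurable_const)).aestronglyMeasurable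
        have e3 := eLpNorm_le_eLpNorm_mul_rpow_measure_univ hqe1 hmeas
        have hexp : 1 / (1 : ENNReal).toReal - 1 / qe.toReal = 1 / p := by
          rw [hqe_toReal, ENNReal.toReal_one]
          have h11 : (1:ℝ)/1 = 1 := by norm_num
          rw [h11]; linarith [hpq]
        have huniv : ν Set.univ = ENNReal.ofReal (t - s) := by
          rw [hν, Measure.restrict_apply_univ, Real.volume_Ioo]
        have e4 : (ENNReal.ofReal (t - s)) ^ ((1:ℝ) / p) = C := by
          rw [ENNReal.ofReal_rpow_of_nonneg hts0.le (by positivity), hC]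
        calc (‖Z x‖₊ : ENNReal) ≤ ∫⁻ r, (‖z' (r, x)‖₊ : ENNReal) ∂ν := e2
          _ = eLpNorm (fun r => z' (r, x)) 1 ν := (eLpNorm_one_eq_lintegral_enorm (f := fun r => z' (r, x))).symm
          _ ≤ eLpNorm (fun r => z' (r, x)) qe ν *
              ν Set.univ ^ (1 / (1 : ENNReal).toReal - 1 / qe.toReal) := e3
          _ = C * eLpNorm (fun r => z' (r, x)) qe ν := by
              rw [hexp, huniv, e4, mul_comm]
          _ = C * (∫⁻ r, (‖z' (r, x)‖₊ : ENNReal) ^ q ∂ν) ^ (1 / q) := by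
              rw [eLpNorm_eq_lintegral_rpow_enorm_toReal hqe0 hqetop, hqe_toReal]
              simp only [enorm_eq_nnnorm]
      have hCq_top : C ^ q ≠ ⊤ := ENNReal.rpow_ne_top_of_nonneg hq0.le hCtop
      have hZq : ∀ x : Fin d → ℝ, (‖Z x‖₊ : ENNReal) ^ q ≤
          C ^ q * ∫⁻ r, (‖z' (r, x)‖₊ : ENNReal) ^ q ∂ν := by
        intro x
        calc (‖Z x‖₊ : ENNReal) ^ q
            ≤ (C * (∫⁻ r, (‖z' (r, x)‖₊ : ENNReal) ^ q ∂ν) ^ (1 / q)) ^ q :=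
              ENNReal.rpow_le_rpow (hZ1 x) hq0.le
          _ = C ^ q * ((∫⁻ r, (‖z' (r, x)‖₊ : ENNReal) ^ q ∂ν) ^ (1 / q)) ^ q :=
              ENNReal.mul_rpow_of_nonneg _ _ hq0.le
          _ = C ^ q * ∫⁻ r, (‖z' (r, x)‖₊ : ENNReal) ^ q ∂ν := by
              rw [← ENNReal.rpow_mul, one_div_mul_cancel hq_ne, ENNReal.rpow_one]
      have hF_meas : Measurable fun zz : ℝ × (Fin d → ℝ) => (‖z' zz‖₊ : ENNReal) ^ q :=
        hz'_meas.enorm.pow_const q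
      have hswap : ∫⁻ x, ∫⁻ r, (‖z' (r, x)‖₊ : ENNReal) ^ q ∂ν ∂(volume : Measure (Fin d → ℝ))
          = ∫⁻ r, ∫⁻ x, (‖z' (r, x)‖₊ : ENNReal) ^ q ∂(volume : Measure (Fin d → ℝ)) ∂ν :=
        lintegral_lintegral_swap ((hF_meas.comp measurable_swap).aemeasurable)
      have hsub : ∫⁻ r, ∫⁻ x, (‖z' (r, x)‖₊ : ENNReal) ^ q
            ∂(volume : Measure (Fin d → ℝ)) ∂ν
          ≤ ∫⁻ r in Set.Ioo (0:ℝ) 1, ∫⁻ x, (‖z' (r, x)‖₊ : ENNReal) ^ q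
            ∂(volume : Measure (Fin d → ℝ)) ∂volume :=
        lintegral_mono' (Measure.restrict_mono (Set.Ioo_subset_Ioo hs ht1) le_rfl) le_rfl
      have hμQ_prod : μQ =
          ((volume : Measure ℝ).restrict (Set.Ioo (0:ℝ) 1)).prod
            (volume : Measure (Fin d → ℝ)) := by
        rw [hμQ, Qset, Measure.volume_eq_prod, ← Measure.prod_restrict, Measure.restrict_univ]
      have hprod : ∫⁻ r in Set.Ioo (0:ℝ) 1, ∫⁻ x, (‖z' (r, x)‖₊ : ENNReal) ^ q
            ∂(volume : Measure (Fin d → ℝ)) ∂volume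
          = ∫⁻ zz, (‖z' zz‖₊ : ENNReal) ^ q ∂μQ := by
        rw [hμQ_prod]
        exact (lintegral_prod _ hF_meas.aemeasurable).symm
      have hmain : ∫⁻ x, (‖Z x‖₊ : ENNReal) ^ q ∂(volume : Measure (Fin d → ℝ))
          ≤ C ^ q * ∫⁻ zz, (‖z' zz‖₊ : ENNReal) ^ q ∂μQ := by
        calc ∫⁻ x, (‖Z x‖₊ : ENNReal) ^ q ∂(volume : Measure (Fin d → ℝ))
            ≤ ∫⁻ x, C ^ q * ∫⁻ r, (‖z' (r, x)‖₊ : ENNReal) ^ q ∂ν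
                ∂(volume : Measure (Fin d → ℝ)) := lintegral_mono hZq
          _ = C ^ q * ∫⁻ x, ∫⁻ r, (‖z' (r, x)‖₊ : ENNReal) ^ q ∂ν
                ∂(volume : Measure (Fin d → ℝ)) := lintegral_const_mul' _ _ hCq_top
          _ ≤ C ^ q * ∫⁻ zz, (‖z' zz‖₊ : ENNReal) ^ q ∂μQ := by
              rw [hswap]
              exact mul_le_mul_right (le_trans hsub (le_of_eq hprod)) _
      rw [eLpNorm_eq_lintegral_rpow_enorm_toReal hqe0 hqetop, hqe_toReal,
        eLpNorm_eq_lintegral_rpow_enorm_toReal hqe0 hqetop, hqe_toReal]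
      simp only [enorm_eq_nnnorm]
      calc (∫⁻ x, (‖Z x‖₊ : ENNReal) ^ q ∂(volume : Measure (Fin d → ℝ))) ^ (1 / q)
          ≤ (C ^ q * ∫⁻ zz, (‖z' zz‖₊ : ENNReal) ^ q ∂μQ) ^ (1 / q) :=
            ENNReal.rpow_le_rpow hmain (by positivity)
        _ = C * (∫⁻ zz, (‖z' zz‖₊ : ENNReal) ^ q ∂μQ) ^ (1 / q) := by
            rw [ENNReal.mul_rpow_of_nonneg _ _ (by positivity : (0:ℝ) ≤ 1 / q),
              ← ENNReal.rpow_mul, mul_one_div_cancel hq_ne, ENNReal.rpow_one]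
    calc eLpNorm (fun x : Fin d → ℝ => W x / (1 + ∑ i, x i ^ 2)) ⊤
          (volume : Measure (Fin d → ℝ)) + eLpNorm Z qe (volume : Measure (Fin d → ℝ))
        ≤ C * A + C * eLpNorm z qe μQ :=
          add_le_add hWbd (hZbd.trans (mul_le_mul_right hzz' C))
      _ = C * (A + eLpNorm z qe μQ) := (mul_add _ _ _).symm
  -- conclude from key
  have hXle : XNorm (volume : Measure (Fin d → ℝ)) q (fun x => 1 + ∑ i, x i ^ 2)
        (fun x => ∫ r in s..t, β (r, x)) / C
      ≤ XNorm μQ q (fun z : ℝ × (Fin d → ℝ) => 1 + ∑ i, z.2 i ^ 2) β := by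
    rw [XNorm]
    refine le_sInf fun c hc => ?_
    rw [ENNReal.div_le_iff_le_mul (Or.inl hC0) (Or.inl hCtop), mul_comm]
    exact key c hc
  calc XNorm (volume : Measure (Fin d → ℝ)) q (fun x => 1 + ∑ i, x i ^ 2)
        (fun x => ∫ r in s..t, β (r, x))
      = XNorm (volume : Measure (Fin d → ℝ)) q (fun x => 1 + ∑ i, x i ^ 2)
        (fun x => ∫ r in s..t, β (r, x)) / C * C :=
        (ENNReal.div_mul_cancel hC0 hCtop).symm
    _ ≤ XNorm μQ q (fun z : ℝ × (Fin d → ℝ) => 1 + ∑ i, z.2 i ^ 2) β * C :=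
        mul_le_mul_left hXle C
    _ = C * XNorm μQ q (fun z : ℝ × (Fin d → ℝ) => 1 + ∑ i, z.2 i ^ 2) β := mul_comm _ _
end

section
/- Let ℒ : 𝔸 × 𝔹 → ℝ be concave in the first variable and convex in the second, where 𝔸, 𝔹 are convex subsets of vector spaces and 𝔹 carries a Hausdorff topology. Suppose there exist a⋆ ∈ 𝔸 and C⋆ > sup_{a∈𝔸} inf_{b∈𝔹} ℒ(a,b) such that 𝔹⋆ := {b ∈ 𝔹 : ℒ(a⋆,b) ≤ C⋆} is nonempty and compact, and b ↦ ℒ(a,b) is lower semicontinuous on 𝔹⋆ for every a ∈ 𝔸. Then min_{b∈𝔹} sup_{a∈𝔸} ℒ(a,b) = sup_{a∈𝔸} inf_{b∈𝔹} ℒ(a,b), with the minimum on the left attained. -/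
open Topology Filter

open Finset in
lemma stmt17_sep_aux {E F : Type*} [AddCommGroup E] [Module ℝ E]
    [AddCommGroup F] [Module ℝ F]
    (A : Set E) (B : Set F) (hA : Convex ℝ A)
    (L : E → F → ℝ)
    (hconc : ∀ b ∈ B, ConcaveOn ℝ A (fun a => L a b))
    (hconv : ∀ a ∈ A, ConvexOn ℝ B (L a))
    (hBddAbove : BddAbove (Set.range fun a : A => ⨅ b : B, L a.1 b.1))
    (b₀ : F) (hb₀ : b₀ ∈ B)
    (ι : Type*) [Fintype ι] (x : ι → E) (hx : ∀ i, x i ∈ A)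
    (ρ : ι → ℝ) (hρ : ∀ i, (⨆ a : A, ⨅ b : B, L a.1 b.1) < ρ i) :
    ∃ b ∈ B, ∀ i, L (x i) b ≤ ρ i := by
  classical
  by_contra hcon
  push_neg at hcon
  cases isEmpty_or_nonempty ι with
  | inl h =>
    obtain ⟨i, -⟩ := hcon b₀ hb₀
    exact h.false i
  | inr hne =>
  haveI : Nonempty B := ⟨⟨b₀, hb₀⟩⟩
  set c : ℝ := ⨆ a : A, ⨅ b : B, L a.1 b.1 with hc
  -- the two sets to separate in ι → ℝ
  set U : Set (ι → ℝ) := {u | ∃ b ∈ B, ∀ i, L (x i) b ≤ u i} with hU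
  set V : Set (ι → ℝ) := {v | ∀ i, v i < ρ i} with hV
  have hUconv : Convex ℝ U := by
    rintro u ⟨b, hb, hub⟩ u' ⟨b', hb', hub'⟩ t s ht hs hts
    refine ⟨t • b + s • b', (hconv (x hne.some) (hx hne.some)).1 hb hb' ht hs hts, fun i => ?_⟩
    calc L (x i) (t • b + s • b') ≤ t * L (x i) b + s * L (x i) b' :=
          (hconv (x i) (hx i)).2 hb hb' ht hs hts
    _ ≤ t * u i + s * u' i := by
          gcongr <;> [exact hub i; exact hub' i]
    _ = (t • u + s • u') i := by simp [smul_eq_mul]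
  have hVconv : Convex ℝ V := by
    have : V = Set.pi Set.univ (fun i => Set.Iio (ρ i)) := by
      ext v; simp [hV, Set.mem_pi]
    rw [this]
    exact convex_pi (fun i _ => convex_Iio _)
  have hVopen : IsOpen V := by
    have : V = Set.pi Set.univ (fun i => Set.Iio (ρ i)) := by
      ext v; simp [hV, Set.mem_pi]
    rw [this]
    exact isOpen_set_pi Set.finite_univ (fun i _ => isOpen_Iio)
  have hdisj : Disjoint V U := by
    rw [Set.disjoint_left]
    rintro v hv ⟨b, hb, hvb⟩
    obtain ⟨i, hi⟩ := hcon b hb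
    exact absurd ((hvb i).trans (hv i).le) (not_le.2 hi)
  obtain ⟨f, α, hfV, hfU⟩ := geometric_hahn_banach_open hVconv hVopen hUconv hdisj
  set lam : ι → ℝ := fun i => f (fun j => if i = j then (1:ℝ) else 0) with hlam
  have hfsum : ∀ v : ι → ℝ, f v = ∑ i, v i * lam i := by
    intro v
    conv_lhs => rw [pi_eq_sum_univ v]
    rw [map_sum]
    exact Finset.sum_congr rfl fun i _ => by rw [map_smul, smul_eq_mul]
  -- lambdas are nonnegative
  have hv₀ : (fun i => ρ i - 1) ∈ V := fun i => by simp
  have hlamnn : ∀ i, 0 ≤ lam i := by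
    intro i
    by_contra hneg
    push_neg at hneg
    set t : ℝ := (α + 1 - f (fun j => ρ j - 1)) / (-lam i) with hT
    have htpos : 0 < t := div_pos (by linarith [hfV _ hv₀]) (by linarith)
    have hmem : (fun j => (ρ j - 1)) - t • (fun j => if i = j then (1:ℝ) else 0) ∈ V := by
      intro j
      by_cases hij : i = j <;> simp [hij, Pi.smul_apply] <;> nlinarith
    have hne0 : lam i ≠ 0 := ne_of_lt hneg
    have := hfV _ hmem
    rw [map_sub, map_smul] at this
    simp only [smul_eq_mul] at this
    have ht2 : t * lam i = -(α + 1 - f (fun j => ρ j - 1)) := by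
      rw [hT, div_mul_eq_mul_div, mul_div_assoc, div_neg, div_self hne0]
      ring
    rw [show (f fun j => if i = j then (1:ℝ) else 0) = lam i from rfl, ht2] at this
    linarith
  -- for every b ∈ B, ∑ lam i * L (x i) b ≥ α
  have hUb : ∀ b ∈ B, α ≤ ∑ i, L (x i) b * lam i := by
    intro b hb
    have : (fun i => L (x i) b) ∈ U := ⟨b, hb, fun i => le_rfl⟩
    have := hfU _ this
    rwa [hfsum] at this
  -- f ρ ≤ α
  have hρα : ∑ i, ρ i * lam i ≤ α := by
    have key : ∀ ε : ℝ, 0 < ε → ∑ i, ρ i * lam i - ε * ∑ i, lam i < α := by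
      intro ε hε
      have hmem : (fun j => ρ j - ε) ∈ V := fun j => by simp [hε]
      have := hfV _ hmem
      rw [hfsum] at this
      calc ∑ i, ρ i * lam i - ε * ∑ i, lam i
          = ∑ i, (ρ i - ε) * lam i := by
            rw [Finset.mul_sum, ← Finset.sum_sub_distrib]
            exact Finset.sum_congr rfl fun i _ => by ring
        _ < α := this
    by_contra hlt
    push_neg at hlt
    rcases eq_or_lt_of_le (Finset.sum_nonneg (fun (i : ι) (_ : i ∈ Finset.univ) => hlamnn i)) with hs | hs
    · have := key 1 one_pos
      rw [← hs] at this
      linarith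
    · have := key ((∑ i, ρ i * lam i - α) / (∑ i, lam i)) (div_pos (by linarith) hs)
      rw [div_mul_cancel₀ _ (ne_of_gt hs)] at this
      linarith
  -- sum of the lambdas is positive
  have hSpos : 0 < ∑ i, lam i := by
    rcases eq_or_lt_of_le (Finset.sum_nonneg (fun (i : ι) (_ : i ∈ Finset.univ) => hlamnn i)) with hs | hs
    · exfalso
      have hall : ∀ i ∈ Finset.univ, lam i = 0 :=
        (Finset.sum_eq_zero_iff_of_nonneg (fun i _ => hlamnn i)).1 hs.symm
      have h1 : (∑ i, ρ i * lam i) = 0 :=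
        Finset.sum_eq_zero (fun i hi => by rw [hall i hi, mul_zero])
      have h2 : (∑ i, L (x i) b₀ * lam i) = 0 :=
        Finset.sum_eq_zero (fun i hi => by rw [hall i hi, mul_zero])
      have h3 := hUb b₀ hb₀
      rw [h2] at h3
      have h4 := hfV _ hv₀
      rw [hfsum] at h4
      have h5 : (∑ i, (ρ i - 1) * lam i) = 0 :=
        Finset.sum_eq_zero (fun i hi => by rw [hall i hi, mul_zero])
      rw [h5] at h4
      linarith
    · exact hs
  set S : ℝ := ∑ i, lam i with hS
  set w : ι → ℝ := fun i => lam i / S with hw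
  have hwnn : ∀ i, 0 ≤ w i := fun i => div_nonneg (hlamnn i) hSpos.le
  have hwsum : ∑ i, w i = 1 := by
    rw [hw, ← Finset.sum_div, ← hS, div_self (ne_of_gt hSpos)]
  have haw : (∑ i, w i • x i) ∈ A :=
    hA.sum_mem (fun i _ => hwnn i) hwsum (fun i _ => hx i)
  set aw : E := ∑ i, w i • x i with haww
  -- β := ∑ w i * ρ i is > c and is a lower bound for L aw b over b ∈ B
  set β : ℝ := ∑ i, w i * ρ i with hβ
  have hcβ : c < β := by
    have h1 : (∑ i, w i * c) < ∑ i, w i * ρ i := by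
      obtain ⟨i₀, -, hi₀⟩ : ∃ i ∈ Finset.univ, 0 < w i := by
        by_contra hno
        push_neg at hno
        have : (∑ i, w i) ≤ 0 :=
          Finset.sum_nonpos (fun i hi => hno i hi)
        rw [hwsum] at this; linarith
      refine Finset.sum_lt_sum (fun i _ => ?_) ⟨i₀, Finset.mem_univ i₀, ?_⟩
      · exact mul_le_mul_of_nonneg_left (hρ i).le (hwnn i)
      · exact (mul_lt_mul_iff_right₀ hi₀).2 (hρ i₀)
    rw [← Finset.sum_mul, hwsum, one_mul] at h1
    exact h1
  have hlow : ∀ b ∈ B, β ≤ L aw b := by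
    intro b hb
    have hJ : (∑ i, w i • L (x i) b) ≤ L aw b :=
      (hconc b hb).le_map_sum (fun i _ => hwnn i) hwsum (fun i _ => hx i)
    have h1 : β ≤ ∑ i, w i • L (x i) b := by
      have h2 : (∑ i, ρ i * lam i) ≤ ∑ i, L (x i) b * lam i :=
        le_trans hρα (hUb b hb)
      have e1 : β = (∑ i, ρ i * lam i) / S := by
        rw [hβ, Finset.sum_div]
        exact Finset.sum_congr rfl fun i _ => by rw [hw]; ring
      have e2 : (∑ i, w i • L (x i) b) = (∑ i, L (x i) b * lam i) / S := by
        rw [Finset.sum_div]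
        exact Finset.sum_congr rfl fun i _ => by rw [hw, smul_eq_mul]; ring
      rw [e1, e2]
      gcongr
    exact h1.trans hJ
  -- conclude
  have h1 : β ≤ ⨅ b : B, L aw b :=
    le_ciInf (fun b => hlow b.1 b.2)
  have h2 : (⨅ b : B, L aw b) ≤ c :=
    le_ciSup hBddAbove ⟨aw, haw⟩
  linarith


/-- Von Neumann minimax theorem with one-sided compactness:
if `ℒ` is concave–convex on convex sets `A × B`, some sublevel set
`B⋆ = {b ∈ B : ℒ(a⋆,b) ≤ C⋆}` (with `C⋆ > sup inf ℒ`) is nonempty and compact,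
and `ℒ(a,·)` is lower semicontinuous on `B⋆`, then the minimum over `b` of
`sup_a ℒ(a,b)` is attained and equals `sup_a inf_b ℒ(a,b)`. -/
theorem stmt17 {E F : Type*} [AddCommGroup E] [Module ℝ E]
    [AddCommGroup F] [Module ℝ F] [TopologicalSpace F] [T2Space F]
    (A : Set E) (B : Set F) (hA : Convex ℝ A) (hB : Convex ℝ B)
    (L : E → F → ℝ)
    (hconc : ∀ b ∈ B, ConcaveOn ℝ A (fun a => L a b))
    (hconv : ∀ a ∈ A, ConvexOn ℝ B (L a))
    (hBddBelow : ∀ a : A, BddBelow (Set.range fun b : B => L a.1 b.1))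
    (hBddAbove : BddAbove (Set.range fun a : A => ⨅ b : B, L a.1 b.1))
    (astar : E) (hastar : astar ∈ A) (Cstar : ℝ)
    (hC : (⨆ a : A, ⨅ b : B, L a.1 b.1) < Cstar)
    (hne : ({b ∈ B | L astar b ≤ Cstar}).Nonempty)
    (hcpt : IsCompact {b ∈ B | L astar b ≤ Cstar})
    (hlsc : ∀ a ∈ A, LowerSemicontinuousOn (L a) {b ∈ B | L astar b ≤ Cstar}) :
    ∃ b ∈ B, ∀ a ∈ A, L a b ≤ ⨆ a' : A, ⨅ b' : B, L a'.1 b'.1 := by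
  classical
  obtain ⟨b₀, hb₀B, hb₀s⟩ := hne
  set c : ℝ := ⨆ a' : A, ⨅ b' : B, L a'.1 b'.1 with hc
  set Bs : Set F := {b ∈ B | L astar b ≤ Cstar} with hBsdef
  have hBsB : Bs ⊆ B := fun b hb => hb.1
  have hBscl : IsClosed Bs := hcpt.isClosed
  -- the family of closed sublevel sets
  set ι : Type _ := ↥A × {r : ℝ // c < r ∧ r < Cstar} with hι
  set Z : ι → Set F := fun p => {b | b ∈ Bs ∧ L p.1.1 b ≤ p.2.1} with hZ
  have hZsub : ∀ p : ι, Z p ⊆ Bs := fun p b hb => hb.1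
  have hZcl : ∀ p : ι, IsClosed (Z p) := by
    rintro ⟨a, r⟩
    apply isClosed_of_closure_subset
    intro y hy
    have hyBs : y ∈ Bs := hBscl.closure_subset ((closure_mono (hZsub ⟨a, r⟩)) hy)
    refine ⟨hyBs, ?_⟩
    by_contra hgt
    push_neg at hgt
    have hl := hlsc a.1 a.2 y hyBs r.1 hgt
    have hnb : (𝓝[Z (a, r)] y).NeBot := mem_closure_iff_nhdsWithin_neBot.1 hy
    have hl' : ∀ᶠ z in 𝓝[Z (a, r)] y, (r : ℝ) < L a.1 z :=
      hl.filter_mono (nhdsWithin_mono y (hZsub ⟨a, r⟩))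
    have hin : ∀ᶠ z in 𝓝[Z (a, r)] y, z ∈ Z (a, r) := eventually_mem_nhdsWithin
    obtain ⟨z, h1, h2⟩ := (hl'.and hin).exists
    exact absurd h2.2 (not_le.2 h1)
  -- finite intersections are nonempty, via the separation lemma
  have hfin : ∀ u : Finset ι, (Bs ∩ ⋂ p ∈ u, Z p).Nonempty := by
    intro u
    obtain ⟨b, hbB, hball⟩ :=
      stmt17_sep_aux A B hA L hconc hconv hBddAbove b₀ hb₀B
        (Option {p : ι // p ∈ u})
        (fun o => o.elim astar (fun j => j.1.1.1))
        (fun o => by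
          cases o with
          | none => exact hastar
          | some j => exact j.1.1.2)
        (fun o => o.elim Cstar (fun j => j.1.2.1))
        (fun o => by
          cases o with
          | none => exact hC
          | some j => exact j.1.2.2.1)
    have hbBs : b ∈ Bs := ⟨hbB, hball none⟩
    refine ⟨b, hbBs, ?_⟩
    rw [Set.mem_iInter₂]
    intro p hp
    exact ⟨hbBs, hball (some ⟨p, hp⟩)⟩
  obtain ⟨b, hbBs, hbZ⟩ := hcpt.inter_iInter_nonempty Z hZcl hfin
  refine ⟨b, hbBs.1, ?_⟩
  intro a ha
  by_contra hgt
  push_neg at hgt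
  set r : ℝ := min ((c + L a b) / 2) ((c + Cstar) / 2) with hr
  have hr1 : c < r := lt_min (by linarith) (by linarith)
  have hr2 : r < Cstar := (min_le_right _ _).trans_lt (by linarith)
  have hr3 : r < L a b := by
    rcases le_total ((c + L a b) / 2) ((c + Cstar) / 2) with h | h
    · rw [hr, min_eq_left h]; linarith
    · rw [hr, min_eq_right h]; linarith
  have hmem : b ∈ Z (⟨a, ha⟩, ⟨r, hr1, hr2⟩) := Set.mem_iInter.1 hbZ _
  exact absurd hmem.2 (not_le.2 hr3)
end
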